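/- Let G be a graph, D ⊆ V(G), k a positive integer, and let A be the k-important separator extension of D. Then A is q-unbreakability-tied to D for q(i) = i·(12^i + 1); that is, for every separation (L,R) of G of order i ≤ k with D ⊆ R, we have |L ∩ A| ≤ i·(12^i + 1). -/

import Mathlib

open Finset

variable {V : Type*} [Fintype V] [DecidableEq V]

/-- A separation of a graph: a pair of vertex sets covering all vertices with no edge
between the two strict sides. Its order is `(A ∩ B).card`. -/
def IsSep (G : SimpleGraph V) (A B : Finset V) : Prop :=
  A ∪ B = Finset.univ ∧
    ∀ a ∈ A, a ∉ B → ∀ b ∈ B, b ∉ A → ¬ G.Adj a b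

/-- The `k`-improved graph `G^⟨k⟩`: `x` and `y` are adjacent iff they are distinct and no
separation of `G` of order at most `k` separates them (i.e. `μ_G(x,y) > k`). -/
def ImprovedGraph (G : SimpleGraph V) (k : ℕ) : SimpleGraph V where
  Adj x y := x ≠ y ∧ ∀ A B : Finset V, IsSep G A B → (A ∩ B).card ≤ k →
    ¬ ((x ∈ A ∧ x ∉ B ∧ y ∈ B ∧ y ∉ A) ∨ (y ∈ A ∧ y ∉ B ∧ x ∈ B ∧ x ∉ A))
  symm := by
    refine ⟨?_⟩
    rintro x y ⟨hxy, h⟩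
    exact ⟨hxy.symm, fun A B hs ho hc => h A B hs ho hc.symm⟩
  loopless := ⟨fun x h => h.1 rfl⟩

/-- `S` is `(q,k)`-unbreakable in `G`: every separation of order at most `k` has at most `q`
vertices of `S` on one of its sides. -/
def UnbreakableSet (G : SimpleGraph V) (S : Finset V) (q k : ℕ) : Prop :=
  ∀ A B : Finset V, IsSep G A B → (A ∩ B).card ≤ k →
    (A ∩ S).card ≤ q ∨ (B ∩ S).card ≤ q

/-- A clique separation: both strict sides nonempty and the separator is a clique. -/
def IsCliqueSep (G : SimpleGraph V) (A B : Finset V) : Prop :=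
  IsSep G A B ∧ (A \ B).Nonempty ∧ (B \ A).Nonempty ∧ G.IsClique (↑(A ∩ B) : Set V)

/-- `y` is reachable from `x` in `G − W`. -/
def AvoidReach (G : SimpleGraph V) (W : Finset V) (x y : V) : Prop :=
  ∃ p : G.Walk x y, ∀ v ∈ p.support, v ∉ W

/-- `W` is an `X`-`Y` separator: no vertex of `Y \ W` is reachable from `X \ W` in `G − W`. -/
def IsSepSet (G : SimpleGraph V) (W X Y : Finset V) : Prop :=
  ∀ x ∈ X, ∀ y ∈ Y, ¬ AvoidReach G W x y

/-- `R_{G−W}(X \ W)`: the set of vertices reachable from `X \ W` in `G − W`. -/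
def ReachSet (G : SimpleGraph V) (W X : Finset V) : Set V :=
  {y | ∃ x ∈ X, AvoidReach G W x y}

/-- An important `X`-`Y` separator. -/
def IsImpSep (G : SimpleGraph V) (X Y W : Finset V) : Prop :=
  IsSepSet G W X Y ∧
  (∀ W' ⊆ W, W' ≠ W → ¬ IsSepSet G W' X Y) ∧
  ∀ W' : Finset V, IsSepSet G W' X Y → W'.card ≤ W.card →
    ¬ (ReachSet G W X ⊂ ReachSet G W' X)

/-- A `k`-important `X`-`Y` separator. -/
def IsKImpSep (G : SimpleGraph V) (k : ℕ) (X Y W : Finset V) : Prop :=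
  IsImpSep G X Y W ∧ W.card ≤ k ∧
  ∀ W' : Finset V, IsImpSep G X Y W' → W'.card ≤ k → W' ≠ W →
    ¬ (ReachSet G W X ⊆ ReachSet G W' X)

/-- The `k`-important separator extension of `D`. -/
def KImpExt (G : SimpleGraph V) (D : Finset V) (k : ℕ) : Set V :=
  {u | (∃ v, v ≠ u ∧ ∃ S : Finset V, IsKImpSep G k {v} D S ∧ u ∈ S) ∨
       (({u} : Finset V).card ≤ k ∧ IsSepSet G {u} {u} D ∧
        ∀ S : Finset V, IsSepSet G S {u} D → S.card ≤ k → S = {u})}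

/-- `C` is (the vertex set of) a connected component of `G − A`. -/
def IsCompAvoiding (G : SimpleGraph V) (A : Set V) (C : Set V) : Prop :=
  ∃ x, x ∉ A ∧ C = {y | ∃ p : G.Walk x y, ∀ v ∈ p.support, v ∉ A}

/-- `C` is (the vertex set of) a connected component of the induced subgraph `G[S]`. -/
def IsCompWithin (G : SimpleGraph V) (S : Set V) (C : Set V) : Prop :=
  ∃ x ∈ S, C = {y | ∃ p : G.Walk x y, ∀ v ∈ p.support, v ∈ S}

/-- The (open) neighborhood of a vertex set `C` in `G`. -/
def nbhdSet (G : SimpleGraph V) (C : Set V) : Set V :=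
  {v | v ∉ C ∧ ∃ c ∈ C, G.Adj v c}

/-- A connectivity-sensitive star decomposition of `G`, given by its central bag and its
set of leaf bags. -/
structure ConnSensStar (G : SimpleGraph V) where
  center : Finset V
  leaves : Finset (Finset V)
  cover : ∀ v : V, v ∈ center ∨ ∃ L ∈ leaves, v ∈ L
  edges : ∀ x y : V, G.Adj x y →
    (x ∈ center ∧ y ∈ center) ∨ ∃ L ∈ leaves, x ∈ L ∧ y ∈ L
  inter : ∀ L ∈ leaves, ∀ L' ∈ leaves, L ≠ L' → ∀ v ∈ L, v ∈ L' → v ∈ center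
  adh_distinct : ∀ L ∈ leaves, ∀ L' ∈ leaves, L ∩ center = L' ∩ center → L = L'
  comp_nbhd : ∀ L ∈ leaves, ∀ C : Set V,
    IsCompWithin G ((↑L : Set V) \ (↑center : Set V)) C → nbhdSet G C = ↑(L ∩ center)

/-- `(A,B)` is an `S`-stable separation of `G`. -/
def IsStableSep (G : SimpleGraph V) (S : Finset V) (A B : Finset V) : Prop :=
  IsSep G A B ∧ ∃ SL SR : Finset V, SL ∪ SR = S ∧ SL ∩ SR = ∅ ∧ SL ⊆ A ∧ SR ⊆ B ∧
    ∀ A' B' : Finset V, IsSep G A' B' → SL ⊆ A' → SR ⊆ B' → (A ∩ B).card ≤ (A' ∩ B').card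

/-- A `Λ`-boundaried graph: a graph together with an injective partial assignment of
labels to (boundary) vertices. -/
structure BGraph (Λ : Type*) (V : Type*) where
  G : SimpleGraph V
  bd : Λ → Option V
  inj : ∀ l l' v, bd l = some v → bd l' = some v → l = l'

/-- `K` (with embeddings `f₁`, `f₂`) is the gluing `H₁ ⊕ H₂` of two boundaried graphs:
vertices of equal label are identified, and an edge is present iff it is present in
(at least) one of the two graphs. -/
def IsGluing {Λ V₁ V₂ W : Type*} (H₁ : BGraph Λ V₁) (H₂ : BGraph Λ V₂)
    (K : SimpleGraph W) (f₁ : V₁ → W) (f₂ : V₂ → W) : Prop :=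
  Function.Injective f₁ ∧ Function.Injective f₂ ∧
  (∀ w : W, (∃ a, f₁ a = w) ∨ (∃ b, f₂ b = w)) ∧
  (∀ a b, f₁ a = f₂ b ↔ ∃ l, H₁.bd l = some a ∧ H₂.bd l = some b) ∧
  (∀ x y : W, K.Adj x y ↔
    (∃ a b, f₁ a = x ∧ f₁ b = y ∧ H₁.G.Adj a b) ∨
    (∃ a b, f₂ a = x ∧ f₂ b = y ∧ H₂.G.Adj a b))

/-- The weak cut signature value of the boundaried graph `H` at `(A', B')` is at most
`n − |A' ∩ B'|`: there is a separation of order at most `n` whose sides contain the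
boundary vertices labeled by `A'` and `B'`, respectively. -/
def WeakSigLE {Λ : Type*} {V : Type*} [Fintype V] [DecidableEq V]
    (H : BGraph Λ V) (A' B' : Finset Λ) (n : ℕ) : Prop :=
  ∃ A B : Finset V, IsSep H.G A B ∧
    (∀ l ∈ A', ∀ v, H.bd l = some v → v ∈ A) ∧
    (∀ l ∈ B', ∀ v, H.bd l = some v → v ∈ B) ∧ (A ∩ B).card ≤ n

/-- Two `Λ`-boundaried graphs have the same weak cut signature. -/
def SameWeakSig {Λ : Type*} [Fintype Λ] [DecidableEq Λ] {V₁ V₂ : Type*}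
    [Fintype V₁] [DecidableEq V₁] [Fintype V₂] [DecidableEq V₂]
    (H₁ : BGraph Λ V₁) (H₂ : BGraph Λ V₂) : Prop :=
  ∀ A' B' : Finset Λ, A' ∪ B' = Finset.univ →
    ∀ n : ℕ, WeakSigLE H₁ A' B' n ↔ WeakSigLE H₂ A' B' n

section AuxMachinery
set_option linter.unusedSectionVars false

open scoped Classical

variable {V : Type*} [Fintype V] [DecidableEq V]

/-- Inductive reachability: `RC G W X y` iff `y` is reachable from `X` avoiding `W`. -/
inductive RC (G : SimpleGraph V) (W X : Finset V) : V → Prop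
  | base {x : V} : x ∈ X → x ∉ W → RC G W X x
  | step {y y' : V} : RC G W X y → G.Adj y y' → y' ∉ W → RC G W X y'

lemma rc_not_mem {G : SimpleGraph V} {W X : Finset V} {y : V} (h : RC G W X y) : y ∉ W := by
  cases h with
  | base _ h2 => exact h2
  | step _ _ h3 => exact h3

lemma rc_of_walk {G : SimpleGraph V} {W X : Finset V} {x y : V}
    (p : G.Walk x y) (hp : ∀ v ∈ p.support, v ∉ W) (hx : RC G W X x) : RC G W X y := by
  induction p with
  | nil => exact hx
  | @cons u w v h q ih =>
      refine ih (fun v hv => hp v (by simp [SimpleGraph.Walk.support_cons, hv]))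
        (RC.step hx h (hp w (by simp [SimpleGraph.Walk.support_cons])))

lemma rc_iff {G : SimpleGraph V} {W X : Finset V} {y : V} :
    RC G W X y ↔ y ∈ ReachSet G W X := by
  constructor
  · intro h
    induction h with
    | @base x hx hxW => exact ⟨x, hx, SimpleGraph.Walk.nil, by simp [hxW]⟩
    | @step a b h hadj hbW ih =>
        obtain ⟨x, hx, p, hp⟩ := ih
        refine ⟨x, hx, p.concat hadj, ?_⟩
        intro v hv
        rw [SimpleGraph.Walk.support_concat, List.mem_append] at hv
        rcases hv with hv | hv
        · exact hp v hv
        · simp at hv; subst hv; exact hbW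
  · rintro ⟨x, hx, p, hp⟩
    exact rc_of_walk p hp (RC.base hx (hp x p.start_mem_support))

lemma reach_eq {G : SimpleGraph V} {W X : Finset V} :
    ReachSet G W X = {y | RC G W X y} := Set.ext fun _ => rc_iff.symm

lemma rc_anti {G : SimpleGraph V} {W W' X : Finset V} (h : W' ⊆ W) {y : V} :
    RC G W X y → RC G W' X y := by
  intro hy
  induction hy with
  | base hx hxW => exact RC.base hx (fun hc => hxW (h hc))
  | step _ hadj hyW ih => exact RC.step ih hadj (fun hc => hyW (h hc))

lemma rc_monoX {G : SimpleGraph V} {W X X' : Finset V} (h : X ⊆ X') {y : V} :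
    RC G W X y → RC G W X' y := by
  intro hy
  induction hy with
  | base hx hxW => exact RC.base (h hx) hxW
  | step _ hadj hyW ih => exact RC.step ih hadj hyW

lemma rc_trans {G : SimpleGraph V} {W X : Finset V} {y z : V}
    (hy : RC G W X y) (hz : RC G W {y} z) : RC G W X z := by
  induction hz with
  | base hx _ => exact (Finset.mem_singleton.mp hx).symm ▸ hy
  | step _ hadj hzW ih => exact RC.step ih hadj hzW

lemma rc_disj {G : SimpleGraph V} {W T X : Finset V}
    (hd : ∀ z, RC G W X z → z ∉ T) {y : V} (h : RC G W X y) : RC G T X y := by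
  induction h with
  | @base x hx hxW => exact RC.base hx (hd _ (RC.base hx hxW))
  | @step a b h1 h2 h3 ih => exact RC.step ih h2 (hd _ (RC.step h1 h2 h3))

lemma rc_source {G : SimpleGraph V} {W X : Finset V} {z : V} (h : RC G W X z) :
    ∃ x ∈ X, x ∉ W := by
  induction h with
  | @base x hx hxW => exact ⟨x, hx, hxW⟩
  | step _ _ _ ih => exact ih

lemma sep_iff {G : SimpleGraph V} {W X Y : Finset V} :
    IsSepSet G W X Y ↔ ∀ y ∈ Y, ¬ RC G W X y := by
  constructor
  · intro h y hy hrc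
    rw [rc_iff] at hrc
    obtain ⟨x, hx, hav⟩ := hrc
    exact h x hx y hy hav
  · intro h x hx y hy hav
    exact h y hy (rc_iff.mpr ⟨x, hx, hav⟩)

lemma sep_mono {G : SimpleGraph V} {W W' X Y : Finset V} (h : W ⊆ W')
    (hs : IsSepSet G W X Y) : IsSepSet G W' X Y := by
  rw [sep_iff] at *
  exact fun y hy hrc => hs y hy (rc_anti h hrc)

lemma sep_of_source_mem {G : SimpleGraph V} {W Y : Finset V} {v : V} (h : v ∈ W) :
    IsSepSet G W {v} Y := by
  rw [sep_iff]
  intro y _ hrc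
  obtain ⟨x, hx, hxW⟩ := rc_source hrc
  rw [Finset.mem_singleton] at hx; subst hx
  exact hxW h

/-- Splitting reachability after removing one vertex of the separator. -/
lemma rc_erase_split {G : SimpleGraph V} {S X : Finset V} {w : V} {z : V}
    (h : RC G (S.erase w) X z) : RC G S X z ∨ RC G (S.erase w) {w} z := by
  induction h with
  | @base x hx hxW =>
      by_cases hxw : x = w
      · subst hxw
        exact Or.inr (RC.base (Finset.mem_singleton_self _) hxW)
      · exact Or.inl (RC.base hx (fun hc => hxW (Finset.mem_erase.mpr ⟨hxw, hc⟩)))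
  | @step y y' h1 hadj hyW ih =>
      rcases ih with ih | ih
      · by_cases hyw : y' = w
        · subst hyw
          exact Or.inr (RC.base (Finset.mem_singleton_self _) hyW)
        · exact Or.inl (RC.step ih hadj (fun hc => hyW (Finset.mem_erase.mpr ⟨hyw, hc⟩)))
      · exact Or.inr (RC.step ih hadj hyW)

/-- F1: in a minimal separator, every vertex can reach `Y` once it alone is removed. -/
lemma min_sep_reach_Y {G : SimpleGraph V} {S X Y : Finset V} {w : V}
    (hsep : IsSepSet G S X Y) (hns : ¬ IsSepSet G (S.erase w) X Y) :
    ∃ d ∈ Y, RC G (S.erase w) {w} d := by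
  rw [sep_iff] at hns
  push_neg at hns
  obtain ⟨d, hd, hrc⟩ := hns
  rcases rc_erase_split hrc with h | h
  · exact absurd h (sep_iff.mp hsep d hd)
  · exact ⟨d, hd, h⟩

/-- F2: in a minimal separator, every vertex is in `X` or adjacent to the reach set. -/
lemma min_sep_nbhd {G : SimpleGraph V} {S X Y : Finset V} {w : V}
    (hsep : IsSepSet G S X Y) (hns : ¬ IsSepSet G (S.erase w) X Y) :
    w ∈ X ∨ ∃ q, RC G S X q ∧ G.Adj q w := by
  by_contra hcon
  push_neg at hcon
  obtain ⟨hwX, hq⟩ := hcon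
  apply hns
  rw [sep_iff] at hsep ⊢
  intro y hy hrc
  refine hsep y hy ?_
  clear hy
  induction hrc with
  | @base x hx hxW =>
      refine RC.base hx (fun hc => ?_)
      by_cases hxw : x = w
      · subst hxw; exact hwX hx
      · exact hxW (Finset.mem_erase.mpr ⟨hxw, hc⟩)
  | @step y y' h1 hadj hyW ih =>
      refine RC.step ih hadj (fun hc => ?_)
      by_cases hyw : y' = w
      · subst hyw; exact hq y ih hadj
      · exact hyW (Finset.mem_erase.mpr ⟨hyw, hc⟩)

/-- A minimal separator containing its (singleton) source is that singleton. -/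
lemma min_sep_singleton {G : SimpleGraph V} {S Y : Finset V} {v : V}
    (hmin : ∀ W' ⊆ S, W' ≠ S → ¬ IsSepSet G W' {v} Y) (hv : v ∈ S) : S = {v} := by
  have : ∀ w ∈ S, w = v := by
    intro w hw
    by_contra hwv
    have hvW : v ∈ S.erase w := Finset.mem_erase.mpr ⟨fun h => hwv h.symm, hv⟩
    exact hmin (S.erase w) (Finset.erase_subset _ _)
      (fun h => (Finset.notMem_erase w S) (h.symm ▸ hw)) (sep_of_source_mem hvW)
  exact Finset.eq_singleton_iff_unique_mem.mpr ⟨hv, this⟩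

/-- Using maximality of an important separator. -/
lemma imp_max {G : SimpleGraph V} {X Y W T : Finset V} (h : IsImpSep G X Y W)
    (hT : IsSepSet G T X Y) (hc : T.card ≤ W.card) (hsub : ∀ z, RC G W X z → RC G T X z) :
    ∀ z, RC G T X z → RC G W X z := by
  have h3 := h.2.2 T hT hc
  have hAB : ReachSet G W X ⊆ ReachSet G T X := by
    rw [reach_eq, reach_eq]
    exact fun z hz => hsub z hz
  have hBA : ReachSet G T X ⊆ ReachSet G W X := by
    by_contra hBA
    exact h3 (Set.ssubset_def.mpr ⟨hAB, hBA⟩)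
  intro z hz
  rw [rc_iff] at *
  exact hBA hz

end AuxMachinery
section CutMachinery
set_option linter.unusedSectionVars false
open scoped Classical

variable {V : Type*} [Fintype V] [DecidableEq V]

/-- The (finset) boundary of a vertex set. -/
noncomputable def bdry (G : SimpleGraph V) (B : Finset V) : Finset V :=
  Finset.univ.filter (fun q => q ∉ B ∧ ∃ b ∈ B, G.Adj q b)

/-- The cut associated to an `X`-side set `B`. -/
noncomputable def cutX (G : SimpleGraph V) (X B : Finset V) : Finset V :=
  bdry G B ∪ (X \ B)

/-- Reachability set as a finset. -/
noncomputable def reachF (G : SimpleGraph V) (W X : Finset V) : Finset V :=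
  Finset.univ.filter (fun z => RC G W X z)

lemma mem_bdry {G : SimpleGraph V} {B : Finset V} {q : V} :
    q ∈ bdry G B ↔ q ∉ B ∧ ∃ b ∈ B, G.Adj q b := by
  simp [bdry]

lemma mem_reachF {G : SimpleGraph V} {W X : Finset V} {z : V} :
    z ∈ reachF G W X ↔ RC G W X z := by
  simp [reachF]

lemma cut_disj {G : SimpleGraph V} {X B : Finset V} {b : V} (hb : b ∈ B) :
    b ∉ cutX G X B := by
  simp only [cutX, Finset.mem_union, mem_bdry, Finset.mem_sdiff]
  push_neg
  exact ⟨fun hc => absurd hb hc.elim, fun _ => hb⟩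

lemma rc_cut_sub {G : SimpleGraph V} {X B : Finset V} {z : V}
    (h : RC G (cutX G X B) X z) : z ∈ B := by
  induction h with
  | @base x hx hxW =>
      by_contra hxB
      exact hxW (Finset.mem_union_right _ (Finset.mem_sdiff.mpr ⟨hx, hxB⟩))
  | @step y y' h1 hadj hyW ih =>
      by_contra hyB
      exact hyW (Finset.mem_union_left _ (mem_bdry.mpr ⟨hyB, y, ih, hadj.symm⟩))

lemma cutX_sep {G : SimpleGraph V} {X Y B : Finset V} (hY : ∀ y ∈ Y, y ∉ B) :
    IsSepSet G (cutX G X B) X Y := by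
  rw [sep_iff]
  intro y hy hrc
  exact hY y hy (rc_cut_sub hrc)

lemma cut_reach_subset {G : SimpleGraph V} {W X : Finset V} :
    cutX G X (reachF G W X) ⊆ W := by
  intro q hq
  rcases Finset.mem_union.mp hq with hq | hq
  · rw [mem_bdry] at hq
    obtain ⟨hqR, b, hb, hadj⟩ := hq
    by_contra hqW
    exact hqR (mem_reachF.mpr (RC.step (mem_reachF.mp hb) hadj.symm hqW))
  · rw [Finset.mem_sdiff] at hq
    by_contra hqW
    exact hq.2 (mem_reachF.mpr (RC.base hq.1 hqW))

lemma rc_to_cut {G : SimpleGraph V} {W X B : Finset V}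
    (hsub : ∀ z, RC G W X z → z ∈ B) {z : V} (h : RC G W X z) :
    RC G (cutX G X B) X z :=
  rc_disj (fun w hw => cut_disj (hsub w hw)) h

lemma cut_submod (G : SimpleGraph V) (X A B : Finset V) :
    (cutX G X (A ∪ B)).card + (cutX G X (A ∩ B)).card ≤
      (cutX G X A).card + (cutX G X B).card := by
  have sub1 : cutX G X (A ∪ B) ∪ cutX G X (A ∩ B) ⊆ cutX G X A ∪ cutX G X B := by
    intro q hq
    rcases Finset.mem_union.mp hq with hq | hq
    · rcases Finset.mem_union.mp hq with hq | hq
      · rw [mem_bdry] at hq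
        obtain ⟨hqn, b, hb, hadj⟩ := hq
        rcases Finset.mem_union.mp hb with hb | hb
        · exact Finset.mem_union_left _ (Finset.mem_union_left _ (mem_bdry.mpr
            ⟨fun hc => hqn (Finset.mem_union_left _ hc), b, hb, hadj⟩))
        · exact Finset.mem_union_right _ (Finset.mem_union_left _ (mem_bdry.mpr
            ⟨fun hc => hqn (Finset.mem_union_right _ hc), b, hb, hadj⟩))
      · rw [Finset.mem_sdiff] at hq
        exact Finset.mem_union_left _ (Finset.mem_union_right _ (Finset.mem_sdiff.mpr
          ⟨hq.1, fun hc => hq.2 (Finset.mem_union_left _ hc)⟩))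
    · rcases Finset.mem_union.mp hq with hq | hq
      · rw [mem_bdry] at hq
        obtain ⟨hqn, b, hb, hadj⟩ := hq
        rw [Finset.mem_inter] at hb
        by_cases hqA : q ∈ A
        · refine Finset.mem_union_right _ (Finset.mem_union_left _ (mem_bdry.mpr
            ⟨fun hc => hqn (Finset.mem_inter.mpr ⟨hqA, hc⟩), b, hb.2, hadj⟩))
        · exact Finset.mem_union_left _ (Finset.mem_union_left _ (mem_bdry.mpr
            ⟨hqA, b, hb.1, hadj⟩))
      · rw [Finset.mem_sdiff] at hq
        by_cases hqA : q ∈ A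
        · refine Finset.mem_union_right _ (Finset.mem_union_right _ (Finset.mem_sdiff.mpr
            ⟨hq.1, fun hc => hq.2 (Finset.mem_inter.mpr ⟨hqA, hc⟩)⟩))
        · exact Finset.mem_union_left _ (Finset.mem_union_right _ (Finset.mem_sdiff.mpr
            ⟨hq.1, hqA⟩))
  have sub2 : cutX G X (A ∪ B) ∩ cutX G X (A ∩ B) ⊆ cutX G X A ∩ cutX G X B := by
    intro q hq
    rw [Finset.mem_inter] at hq
    obtain ⟨h1, h2⟩ := hq
    have hqn : q ∉ A ∧ q ∉ B := by
      rcases Finset.mem_union.mp h1 with h1 | h1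
      · have := (mem_bdry.mp h1).1
        exact ⟨fun hc => this (Finset.mem_union_left _ hc),
               fun hc => this (Finset.mem_union_right _ hc)⟩
      · have := (Finset.mem_sdiff.mp h1).2
        exact ⟨fun hc => this (Finset.mem_union_left _ hc),
               fun hc => this (Finset.mem_union_right _ hc)⟩
    rcases Finset.mem_union.mp h2 with h2 | h2
    · rw [mem_bdry] at h2
      obtain ⟨_, b, hb, hadj⟩ := h2
      rw [Finset.mem_inter] at hb
      exact Finset.mem_inter.mpr
        ⟨Finset.mem_union_left _ (mem_bdry.mpr ⟨hqn.1, b, hb.1, hadj⟩),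
         Finset.mem_union_left _ (mem_bdry.mpr ⟨hqn.2, b, hb.2, hadj⟩)⟩
    · rw [Finset.mem_sdiff] at h2
      exact Finset.mem_inter.mpr
        ⟨Finset.mem_union_right _ (Finset.mem_sdiff.mpr ⟨h2.1, hqn.1⟩),
         Finset.mem_union_right _ (Finset.mem_sdiff.mpr ⟨h2.1, hqn.2⟩)⟩
  calc (cutX G X (A ∪ B)).card + (cutX G X (A ∩ B)).card
      = (cutX G X (A ∪ B) ∪ cutX G X (A ∩ B)).card +
        (cutX G X (A ∪ B) ∩ cutX G X (A ∩ B)).card :=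
        (Finset.card_union_add_card_inter _ _).symm
    _ ≤ (cutX G X A ∪ cutX G X B).card + (cutX G X A ∩ cutX G X B).card :=
        Nat.add_le_add (Finset.card_le_card sub1) (Finset.card_le_card sub2)
    _ = (cutX G X A).card + (cutX G X B).card := Finset.card_union_add_card_inter _ _

end CutMachinery
section DelMachinery
set_option linter.unusedSectionVars false
open scoped Classical

variable {V : Type*} [Fintype V] [DecidableEq V]

/-- The graph with a vertex deleted (isolated). -/
def Gdel (G : SimpleGraph V) (v : V) : SimpleGraph V where
  Adj x y := G.Adj x y ∧ x ≠ v ∧ y ≠ v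
  symm := by refine ⟨?_⟩; rintro x y ⟨h1, h2, h3⟩; exact ⟨h1.symm, h3, h2⟩
  loopless := ⟨fun x h => G.loopless.irrefl x h.1⟩

lemma rc_del_iff {H : SimpleGraph V} {v : V} {T X : Finset V} {z : V} :
    RC (Gdel H v) T (X.erase v) z ↔ RC H (T ∪ {v}) X z := by
  constructor
  · intro h
    induction h with
    | @base x hx hxT =>
        rw [Finset.mem_erase] at hx
        refine RC.base hx.2 ?_
        rw [Finset.mem_union, Finset.mem_singleton]
        push_neg
        exact ⟨hxT, hx.1⟩
    | @step y y' h1 hadj hyT ih =>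
        refine RC.step ih hadj.1 ?_
        rw [Finset.mem_union, Finset.mem_singleton]
        push_neg
        exact ⟨hyT, hadj.2.2⟩
  · intro h
    induction h with
    | @base x hx hxT =>
        rw [Finset.mem_union, Finset.mem_singleton] at hxT
        push_neg at hxT
        exact RC.base (Finset.mem_erase.mpr ⟨hxT.2, hx⟩) hxT.1
    | @step y y' h1 hadj hyT ih =>
        rw [Finset.mem_union, Finset.mem_singleton] at hyT
        push_neg at hyT
        have hy : y ∉ T ∪ {v} := rc_not_mem h1
        rw [Finset.mem_union, Finset.mem_singleton] at hy
        push_neg at hy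
        exact RC.step ih ⟨hadj, hy.2, hyT.2⟩ hyT.1

lemma rc_del_erase {H : SimpleGraph V} {v : V} {T X : Finset V} {z : V} :
    RC (Gdel H v) T (X.erase v) z ↔ RC (Gdel H v) (T.erase v) (X.erase v) z := by
  constructor
  · exact rc_anti (Finset.erase_subset _ _)
  · intro h
    induction h with
    | @base x hx hxT =>
        refine RC.base hx (fun hc => hxT (Finset.mem_erase.mpr ⟨(Finset.mem_erase.mp hx).1, hc⟩))
    | @step y y' h1 hadj hyT ih =>
        exact RC.step ih hadj (fun hc => hyT (Finset.mem_erase.mpr ⟨hadj.2.2, hc⟩))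

lemma sep_del_lift {H : SimpleGraph V} {v : V} {T X Y : Finset V}
    (h : IsSepSet (Gdel H v) T (X.erase v) (Y.erase v)) :
    IsSepSet H (insert v T) X Y := by
  rw [sep_iff] at h ⊢
  intro y hy hrc
  have hyv : y ∉ insert v T := rc_not_mem hrc
  have hy2 : y ≠ v := fun hc => hyv (hc ▸ Finset.mem_insert_self v T)
  rw [Finset.insert_eq, Finset.union_comm] at hrc
  rw [← rc_del_iff] at hrc
  exact h y (Finset.mem_erase.mpr ⟨hy2, hy⟩) hrc

lemma imp_del {H : SimpleGraph V} {v : V} {X Y W : Finset V}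
    (h : IsImpSep H X Y W) (hv : v ∈ W) :
    IsImpSep (Gdel H v) (X.erase v) (Y.erase v) (W.erase v) := by
  have hWeq : W.erase v ∪ {v} = W := by
    rw [Finset.union_comm, ← Finset.insert_eq, Finset.insert_erase hv]
  have hrcW : ∀ z, RC (Gdel H v) (W.erase v) (X.erase v) z ↔ RC H W X z := by
    intro z; rw [rc_del_iff, hWeq]
  refine ⟨?_, ?_, ?_⟩
  · rw [sep_iff]
    intro y hy hrc
    rw [hrcW] at hrc
    exact sep_iff.mp h.1 y (Finset.mem_erase.mp hy).2 hrc
  · intro W₂ hW₂ hne hsep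
    have hvW₂ : v ∉ W₂ := fun hc => Finset.notMem_erase v W (hW₂ hc)
    have hsub : insert v W₂ ⊆ W := by
      intro w hw
      rcases Finset.mem_insert.mp hw with hw | hw
      · exact hw ▸ hv
      · exact Finset.erase_subset _ _ (hW₂ hw)
    have hne2 : insert v W₂ ≠ W := by
      intro hc
      apply hne
      rw [← hc, Finset.erase_insert hvW₂]
    have := h.2.1 (insert v W₂) hsub hne2
    apply this
    rw [sep_iff]
    intro y hy hrc
    have hyv : y ∉ insert v W₂ := rc_not_mem hrc
    have hy2 : y ≠ v := fun hc => hyv (hc ▸ Finset.mem_insert_self v W₂)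
    rw [Finset.insert_eq, Finset.union_comm, ← rc_del_iff] at hrc
    exact sep_iff.mp hsep y (Finset.mem_erase.mpr ⟨hy2, hy⟩) hrc
  · intro T hT hTc hss
    set T₀ := T.erase v with hT₀
    have hrcT : ∀ z, RC (Gdel H v) T (X.erase v) z ↔ RC H (insert v T₀) X z := by
      intro z
      rw [rc_del_erase, rc_del_iff, Finset.union_comm, ← Finset.insert_eq]
    have hsepT' : IsSepSet H (insert v T₀) X Y := by
      rw [sep_iff]
      intro y hy hrc
      have hyv : y ∉ insert v T₀ := rc_not_mem hrc
      have hy2 : y ≠ v := fun hc => hyv (hc ▸ Finset.mem_insert_self v T₀)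
      rw [← hrcT] at hrc
      exact sep_iff.mp hT y (Finset.mem_erase.mpr ⟨hy2, hy⟩) hrc
    have hcard : (insert v T₀).card ≤ W.card := by
      have h1 : T₀.card ≤ T.card := Finset.card_le_card (Finset.erase_subset _ _)
      have h2 : (W.erase v).card = W.card - 1 := Finset.card_erase_of_mem hv
      have h3 : (insert v T₀).card ≤ T₀.card + 1 := Finset.card_insert_le _ _
      have h4 : 1 ≤ W.card := Finset.card_pos.mpr ⟨v, hv⟩
      omega
    apply h.2.2 (insert v T₀) hsepT' hcard
    have e1 : ReachSet H W X = ReachSet (Gdel H v) (W.erase v) (X.erase v) := by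
      rw [reach_eq, reach_eq]; exact Set.ext fun z => (hrcW z).symm
    have e2 : ReachSet H (insert v T₀) X = ReachSet (Gdel H v) T (X.erase v) := by
      rw [reach_eq, reach_eq]; exact Set.ext fun z => (hrcT z).symm
    rw [e1, e2]
    exact hss

end DelMachinery
section CountLemmas
set_option linter.unusedSectionVars false
open scoped Classical

variable {V : Type*} [Fintype V] [DecidableEq V]

lemma cut_inter_subset {G : SimpleGraph V} {X A B : Finset V} {q : V}
    (hq : q ∈ cutX G X (A ∩ B)) : q ∈ cutX G X A ∪ cutX G X B := by
  rcases Finset.mem_union.mp hq with hq | hq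
  · rw [mem_bdry] at hq
    obtain ⟨hqn, b, hb, hadj⟩ := hq
    rw [Finset.mem_inter] at hb
    by_cases hqA : q ∈ A
    · refine Finset.mem_union_right _ (Finset.mem_union_left _ (mem_bdry.mpr
        ⟨fun hc => hqn (Finset.mem_inter.mpr ⟨hqA, hc⟩), b, hb.2, hadj⟩))
    · exact Finset.mem_union_left _ (Finset.mem_union_left _ (mem_bdry.mpr ⟨hqA, b, hb.1, hadj⟩))
  · rw [Finset.mem_sdiff] at hq
    by_cases hqA : q ∈ A
    · refine Finset.mem_union_right _ (Finset.mem_union_right _ (Finset.mem_sdiff.mpr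
        ⟨hq.1, fun hc => hq.2 (Finset.mem_inter.mpr ⟨hqA, hc⟩)⟩))
    · exact Finset.mem_union_left _ (Finset.mem_union_right _ (Finset.mem_sdiff.mpr ⟨hq.1, hqA⟩))

/-- K1: every `F`-avoiding important separator's reach contains that of the max min cut. -/
lemma k1 {H : SimpleGraph V} {X Y F Sstar W : Finset V}
    (hSsep : IsSepSet H Sstar X Y)
    (hmin : ∀ T, IsSepSet H T X Y → (∀ f ∈ F, f ∉ T) → Sstar.card ≤ T.card)
    (hSF : ∀ f ∈ F, f ∉ Sstar)
    (hW : IsImpSep H X Y W) (hWF : ∀ f ∈ F, f ∉ W) :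
    ∀ z, RC H Sstar X z → RC H W X z := by
  set A := reachF H Sstar X with hA
  set B := reachF H W X with hB
  have hYA : ∀ y ∈ Y, y ∉ A := fun y hy hc => sep_iff.mp hSsep y hy (mem_reachF.mp hc)
  have hYB : ∀ y ∈ Y, y ∉ B := fun y hy hc => sep_iff.mp hW.1 y hy (mem_reachF.mp hc)
  have hsepI : IsSepSet H (cutX H X (A ∩ B)) X Y :=
    cutX_sep (fun y hy hc => hYA y hy (Finset.mem_inter.mp hc).1)
  have hsepU : IsSepSet H (cutX H X (A ∪ B)) X Y :=
    cutX_sep (fun y hy hc => (Finset.mem_union.mp hc).elim (hYA y hy) (hYB y hy))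
  have hIF : ∀ f ∈ F, f ∉ cutX H X (A ∩ B) := by
    intro f hf hc
    rcases Finset.mem_union.mp (cut_inter_subset hc) with hc | hc
    · exact hSF f hf (cut_reach_subset hc)
    · exact hWF f hf (cut_reach_subset hc)
  have hIlam := hmin _ hsepI hIF
  have hsub := cut_submod H X A B
  have hcA : (cutX H X A).card ≤ Sstar.card := Finset.card_le_card cut_reach_subset
  have hcB : (cutX H X B).card ≤ W.card := Finset.card_le_card cut_reach_subset
  have hUcard : (cutX H X (A ∪ B)).card ≤ W.card := by omega
  have hWsub : ∀ z, RC H W X z → RC H (cutX H X (A ∪ B)) X z :=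
    fun z hz => rc_to_cut (fun w hw => Finset.mem_union_right _ (mem_reachF.mpr hw)) hz
  have hback := imp_max hW hsepU hUcard hWsub
  intro z hz
  exact hback z (rc_to_cut (fun w hw => Finset.mem_union_left _ (mem_reachF.mpr hw)) hz)

lemma erase_not_sep {H : SimpleGraph V} {X Y F Sstar : Finset V} {v : V}
    (hSF : ∀ f ∈ F, f ∉ Sstar)
    (hmin : ∀ T, IsSepSet H T X Y → (∀ f ∈ F, f ∉ T) → Sstar.card ≤ T.card)
    (hvS : v ∈ Sstar) : ¬ IsSepSet H (Sstar.erase v) X Y := by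
  intro hc
  have h1 := hmin _ hc (fun f hf hc2 => hSF f hf (Finset.erase_subset _ _ hc2))
  have h2 : (Sstar.erase v).card = Sstar.card - 1 := Finset.card_erase_of_mem hvS
  have h3 : 1 ≤ Sstar.card := Finset.card_pos.mpr ⟨v, hvS⟩
  omega

/-- K2: after augmenting the source side by the maximal min-cut reach and `v`,
no small separator avoiding `v` exists. -/
lemma k2 {H : SimpleGraph V} {X Y F Sstar : Finset V} {v : V}
    (hSsep : IsSepSet H Sstar X Y) (hSF : ∀ f ∈ F, f ∉ Sstar)
    (hmin : ∀ T, IsSepSet H T X Y → (∀ f ∈ F, f ∉ T) → Sstar.card ≤ T.card)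
    (hmax : ∀ T, IsSepSet H T X Y → (∀ f ∈ F, f ∉ T) → T.card = Sstar.card →
      (reachF H T X).card ≤ (reachF H Sstar X).card)
    (hvS : v ∈ Sstar) {T : Finset V}
    (hT : IsSepSet H T (X ∪ reachF H Sstar X ∪ {v}) Y)
    (hTF : ∀ f ∈ F, f ∉ T) (hvT : v ∉ T) (hTc : T.card ≤ Sstar.card) : False := by
  set A := reachF H Sstar X with hA
  set X' := X ∪ A ∪ {v} with hX'
  set B := reachF H T X' with hB
  have hcutB : cutX H X B ⊆ T := by
    intro q hq
    rcases Finset.mem_union.mp hq with hq | hq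
    · rw [mem_bdry] at hq
      obtain ⟨hqB, b, hb, hadj⟩ := hq
      by_contra hqT
      exact hqB (mem_reachF.mpr (RC.step (mem_reachF.mp hb) hadj.symm hqT))
    · rw [Finset.mem_sdiff] at hq
      by_contra hqT
      exact hq.2 (mem_reachF.mpr
        (RC.base (Finset.mem_union_left _ (Finset.mem_union_left _ hq.1)) hqT))
  have hYA : ∀ y ∈ Y, y ∉ A := fun y hy hc => sep_iff.mp hSsep y hy (mem_reachF.mp hc)
  have hYB : ∀ y ∈ Y, y ∉ B := fun y hy hc => sep_iff.mp hT y hy (mem_reachF.mp hc)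
  have hsepI : IsSepSet H (cutX H X (A ∩ B)) X Y :=
    cutX_sep (fun y hy hc => hYA y hy (Finset.mem_inter.mp hc).1)
  have hsepU : IsSepSet H (cutX H X (A ∪ B)) X Y :=
    cutX_sep (fun y hy hc => (Finset.mem_union.mp hc).elim (hYA y hy) (hYB y hy))
  have hIF : ∀ f ∈ F, f ∉ cutX H X (A ∩ B) := by
    intro f hf hc
    rcases Finset.mem_union.mp (cut_inter_subset hc) with hc | hc
    · exact hSF f hf (cut_reach_subset hc)
    · exact hTF f hf (hcutB hc)
  have hUF : ∀ f ∈ F, f ∉ cutX H X (A ∪ B) := by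
    intro f hf hc
    have : cutX H X (A ∪ B) ⊆ cutX H X A ∪ cutX H X B := by
      intro q hq
      rcases Finset.mem_union.mp hq with hq | hq
      · rw [mem_bdry] at hq
        obtain ⟨hqn, b, hb, hadj⟩ := hq
        rcases Finset.mem_union.mp hb with hb | hb
        · exact Finset.mem_union_left _ (Finset.mem_union_left _ (mem_bdry.mpr
            ⟨fun hc2 => hqn (Finset.mem_union_left _ hc2), b, hb, hadj⟩))
        · exact Finset.mem_union_right _ (Finset.mem_union_left _ (mem_bdry.mpr
            ⟨fun hc2 => hqn (Finset.mem_union_right _ hc2), b, hb, hadj⟩))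
      · rw [Finset.mem_sdiff] at hq
        exact Finset.mem_union_left _ (Finset.mem_union_right _ (Finset.mem_sdiff.mpr
          ⟨hq.1, fun hc2 => hq.2 (Finset.mem_union_left _ hc2)⟩))
    rcases Finset.mem_union.mp (this hc) with hc | hc
    · exact hSF f hf (cut_reach_subset hc)
    · exact hTF f hf (hcutB hc)
  have hIlam := hmin _ hsepI hIF
  have hsub := cut_submod H X A B
  have hcA : (cutX H X A).card ≤ Sstar.card := Finset.card_le_card cut_reach_subset
  have hcB : (cutX H X B).card ≤ T.card := Finset.card_le_card hcutB
  have hUcard : (cutX H X (A ∪ B)).card ≤ Sstar.card := by omega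
  have hUmin := hmin _ hsepU hUF
  have hUeq : (cutX H X (A ∪ B)).card = Sstar.card := le_antisymm hUcard hUmin
  have hAsub : ∀ z, RC H Sstar X z → RC H (cutX H X (A ∪ B)) X z :=
    fun z hz => rc_to_cut (fun w hw => Finset.mem_union_left _ (mem_reachF.mpr hw)) hz
  have hvB : v ∈ B := mem_reachF.mpr
    (RC.base (Finset.mem_union_right _ (Finset.mem_singleton_self _)) hvT)
  have hvCut : v ∉ cutX H X (A ∪ B) := cut_disj (Finset.mem_union_right _ hvB)
  have hnb := min_sep_nbhd hSsep (erase_not_sep hSF hmin hvS)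
  have hvReach : RC H (cutX H X (A ∪ B)) X v := by
    rcases hnb with hx | ⟨q, hq, hadj⟩
    · exact RC.base hx hvCut
    · exact RC.step (hAsub q hq) hadj hvCut
  have hvA : v ∉ A := fun hc => rc_not_mem (mem_reachF.mp hc) hvS
  have hsubA : insert v A ⊆ reachF H (cutX H X (A ∪ B)) X := by
    intro w hw
    rcases Finset.mem_insert.mp hw with hw | hw
    · exact hw ▸ mem_reachF.mpr hvReach
    · exact mem_reachF.mpr (hAsub w (mem_reachF.mp hw))
  have hle := Finset.card_le_card hsubA
  rw [Finset.card_insert_of_notMem hvA] at hle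
  have hmaxU := hmax _ hsepU hUF hUeq
  omega

/-- Branch 2: important separators avoiding `v` are important for the augmented source. -/
lemma imp_extend {H : SimpleGraph V} {X Y F Sstar W : Finset V} {v : V}
    (hSsep : IsSepSet H Sstar X Y) (hSF : ∀ f ∈ F, f ∉ Sstar)
    (hmin : ∀ T, IsSepSet H T X Y → (∀ f ∈ F, f ∉ T) → Sstar.card ≤ T.card)
    (hvS : v ∈ Sstar)
    (hW : IsImpSep H X Y W) (hWF : ∀ f ∈ F, f ∉ W) (hvW : v ∉ W) :
    IsImpSep H (X ∪ reachF H Sstar X ∪ {v}) Y W := by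
  have hk1 := k1 hSsep hmin hSF hW hWF
  set A := reachF H Sstar X with hA
  set X' := X ∪ A ∪ {v} with hX'
  have hnb := min_sep_nbhd hSsep (erase_not_sep hSF hmin hvS)
  have hvR : RC H W X v := by
    rcases hnb with hx | ⟨q, hq, hadj⟩
    · exact RC.base hx hvW
    · exact RC.step (hk1 q hq) hadj hvW
  have hXX' : X ⊆ X' := fun x hx => Finset.mem_union_left _ (Finset.mem_union_left _ hx)
  have habs : ∀ z, RC H W X' z ↔ RC H W X z := by
    intro z
    constructor
    · intro h
      induction h with
      | @base x hx hxW =>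
          rcases Finset.mem_union.mp hx with hx | hx
          · rcases Finset.mem_union.mp hx with hx | hx
            · exact RC.base hx hxW
            · exact hk1 x (mem_reachF.mp hx)
          · rw [Finset.mem_singleton] at hx; exact hx ▸ hvR
      | step h1 hadj hyW ih => exact RC.step ih hadj hyW
    · exact rc_monoX hXX'
  refine ⟨?_, ?_, ?_⟩
  · rw [sep_iff]
    intro y hy hrc
    rw [habs] at hrc
    exact sep_iff.mp hW.1 y hy hrc
  · intro W₂ hsub hne hsep
    apply hW.2.1 W₂ hsub hne
    rw [sep_iff] at hsep ⊢
    intro y hy hrc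
    exact hsep y hy (rc_monoX hXX' hrc)
  · intro T hT hTc hss
    set B := reachF H T X' with hBdef
    have hssub : ReachSet H W X' ⊆ ReachSet H T X' := hss.1
    have hYB : ∀ y ∈ Y, y ∉ B := fun y hy hc => sep_iff.mp hT y hy (mem_reachF.mp hc)
    have hcutB : cutX H X B ⊆ T := by
      intro q hq
      rcases Finset.mem_union.mp hq with hq | hq
      · rw [mem_bdry] at hq
        obtain ⟨hqB, b, hb, hadj⟩ := hq
        by_contra hqT
        exact hqB (mem_reachF.mpr (RC.step (mem_reachF.mp hb) hadj.symm hqT))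
      · rw [Finset.mem_sdiff] at hq
        by_contra hqT
        exact hq.2 (mem_reachF.mpr (RC.base (hXX' hq.1) hqT))
    have hsepT' : IsSepSet H (cutX H X B) X Y := cutX_sep hYB
    have hTc' : (cutX H X B).card ≤ W.card := le_trans (Finset.card_le_card hcutB) hTc
    have hWB : ∀ z, RC H W X z → z ∈ B := by
      intro z hz
      have h1 : z ∈ ReachSet H W X' := by
        rw [reach_eq]
        exact rc_monoX hXX' hz
      have h2 := hssub h1
      rw [reach_eq] at h2
      exact mem_reachF.mpr h2
    have hWcut : ∀ z, RC H W X z → RC H (cutX H X B) X z := fun z hz => rc_to_cut hWB hz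
    have hTtr : ∀ z, RC H T X' z → RC H (cutX H X B) X z := by
      intro z hz
      induction hz with
      | @base x hx hxT =>
          rcases Finset.mem_union.mp hx with hx | hx
          · rcases Finset.mem_union.mp hx with hx | hx
            · exact RC.base hx (cut_disj (mem_reachF.mpr (RC.base (hXX' hx) hxT)))
            · exact hWcut x (hk1 x (mem_reachF.mp hx))
          · rw [Finset.mem_singleton] at hx
            subst hx
            exact hWcut _ hvR
      | @step y y' h1 hadj hyT ih =>
          exact RC.step ih hadj (cut_disj (mem_reachF.mpr (RC.step h1 hadj hyT)))
    obtain ⟨p₀, hp₀T, hp₀W⟩ := Set.not_subset.mp (Set.ssubset_def.mp hss).2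
    apply hW.2.2 (cutX H X B) hsepT' hTc'
    rw [Set.ssubset_def]
    constructor
    · rw [reach_eq, reach_eq]
      intro z hz
      exact hWcut z hz
    · intro hcon
      apply hp₀W
      have h1 : RC H (cutX H X B) X p₀ := hTtr p₀ (by rw [reach_eq] at hp₀T; exact hp₀T)
      have h2 : p₀ ∈ ReachSet H W X := hcon (by rw [reach_eq]; exact h1)
      rw [reach_eq] at h2 ⊢
      exact (habs p₀).mpr h2

end CountLemmas
section CountTheorem
set_option linter.unusedSectionVars false
open scoped Classical

variable {V : Type*} [Fintype V] [DecidableEq V]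

theorem count_imp (μ : ℕ) :
    ∀ (H : SimpleGraph V) (X Y F : Finset V) (s lam0 : ℕ),
    (∀ T, IsSepSet H T X Y → (∀ f ∈ F, f ∉ T) → lam0 ≤ T.card) →
    2*s ≤ μ + lam0 →
    ((Finset.univ : Finset (Finset V)).filter
      (fun W => IsImpSep H X Y W ∧ W.card ≤ s ∧ ∀ f ∈ F, f ∉ W)).card ≤ 2^μ := by
  induction μ using Nat.strong_induction_on with
  | _ μ ih =>
    intro H X Y F s lam0 hlow hmu
    set Cand := ((Finset.univ : Finset (Finset V)).filter
      (fun W => IsImpSep H X Y W ∧ W.card ≤ s ∧ ∀ f ∈ F, f ∉ W)) with hCand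
    have hone : (1 : ℕ) ≤ 2^μ := Nat.one_le_two_pow
    by_cases hs0 : s = 0
    · subst hs0
      have hsub : Cand ⊆ {∅} := by
        intro W hW
        rw [hCand, Finset.mem_filter] at hW
        rw [Finset.mem_singleton]
        exact Finset.card_eq_zero.mp (Nat.le_zero.mp hW.2.2.1)
      calc Cand.card ≤ ({∅} : Finset (Finset V)).card := Finset.card_le_card hsub
        _ = 1 := Finset.card_singleton _
        _ ≤ 2^μ := hone
    by_cases hex : ∃ T : Finset V, IsSepSet H T X Y ∧ (∀ f ∈ F, f ∉ T) ∧ T.card ≤ s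
    swap
    · have hempty : Cand = ∅ := by
        rw [Finset.eq_empty_iff_forall_notMem]
        intro W hW
        rw [hCand, Finset.mem_filter] at hW
        exact hex ⟨W, hW.2.1.1, hW.2.2.2, hW.2.2.1⟩
      rw [hempty]
      simpa using Nat.zero_le _
    obtain ⟨Tex, hTex1, hTex2, hTex3⟩ := hex
    set SEPS := (Finset.univ : Finset (Finset V)).filter
      (fun T => IsSepSet H T X Y ∧ ∀ f ∈ F, f ∉ T) with hSEPS
    have hSne : SEPS.Nonempty :=
      ⟨Tex, Finset.mem_filter.mpr ⟨Finset.mem_univ _, hTex1, hTex2⟩⟩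
    obtain ⟨T₀, hT₀mem, hT₀min⟩ := Finset.exists_min_image SEPS Finset.card hSne
    set lam := T₀.card with hlamdef
    set MINS := SEPS.filter (fun T => T.card = lam) with hMINS
    have hMne : MINS.Nonempty := ⟨T₀, Finset.mem_filter.mpr ⟨hT₀mem, rfl⟩⟩
    obtain ⟨S, hSmem, hSmax'⟩ := Finset.exists_max_image MINS (fun T => (reachF H T X).card) hMne
    rw [hMINS, Finset.mem_filter] at hSmem
    obtain ⟨hSmem, hScard⟩ := hSmem
    rw [hSEPS, Finset.mem_filter] at hSmem
    obtain ⟨_, hSsep, hSF⟩ := hSmem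
    have hmin : ∀ T, IsSepSet H T X Y → (∀ f ∈ F, f ∉ T) → S.card ≤ T.card := by
      intro T h1 h2
      rw [hScard]
      exact hT₀min T (Finset.mem_filter.mpr ⟨Finset.mem_univ _, h1, h2⟩)
    have hmax : ∀ T, IsSepSet H T X Y → (∀ f ∈ F, f ∉ T) → T.card = S.card →
        (reachF H T X).card ≤ (reachF H S X).card := by
      intro T h1 h2 h3
      exact hSmax' T (Finset.mem_filter.mpr
        ⟨Finset.mem_filter.mpr ⟨Finset.mem_univ _, h1, h2⟩, h3.trans hScard⟩)
    have hlam_s : lam ≤ s :=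
      le_trans (hT₀min Tex (Finset.mem_filter.mpr ⟨Finset.mem_univ _, hTex1, hTex2⟩)) hTex3
    have hlam0 : lam0 ≤ lam := by
      rw [hSEPS, Finset.mem_filter] at hT₀mem
      exact hlow T₀ hT₀mem.2.1 hT₀mem.2.2
    by_cases hScard0 : S.card = 0
    · have hSempty : S = ∅ := Finset.card_eq_zero.mp hScard0
      have hsub : Cand ⊆ {∅} := by
        intro W hW
        rw [hCand, Finset.mem_filter] at hW
        rw [Finset.mem_singleton]
        by_contra hne
        exact hW.2.1.2.1 ∅ (Finset.empty_subset _) (fun h => hne h.symm) (hSempty ▸ hSsep)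
      calc Cand.card ≤ ({∅} : Finset (Finset V)).card := Finset.card_le_card hsub
        _ = 1 := Finset.card_singleton _
        _ ≤ 2^μ := hone
    obtain ⟨v, hvS⟩ := Finset.card_pos.mp (Nat.pos_of_ne_zero hScard0)
    have hvF : v ∉ F := fun hc => hSF v hc hvS
    have hs1 : 1 ≤ s := Nat.one_le_iff_ne_zero.mpr hs0
    have hlam1 : 1 ≤ lam := hScard ▸ Finset.card_pos.mpr ⟨v, hvS⟩
    have hmu1 : 1 ≤ μ := by omega
    -- branch 1
    set target1 := ((Finset.univ : Finset (Finset V)).filter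
      (fun W => IsImpSep (Gdel H v) (X.erase v) (Y.erase v) W ∧ W.card ≤ s - 1 ∧
        ∀ f ∈ F, f ∉ W)) with htarget1
    have b1 : (Cand.filter (fun W => v ∈ W)).card ≤ target1.card := by
      apply Finset.card_le_card_of_injOn (fun W => W.erase v)
      · intro W hW
        simp only [Finset.mem_coe] at hW ⊢
        rw [Finset.mem_filter] at hW
        obtain ⟨hW, hvW⟩ := hW
        rw [hCand, Finset.mem_filter] at hW
        obtain ⟨_, himp, hcard, hF⟩ := hW
        rw [htarget1, Finset.mem_filter]
        refine ⟨Finset.mem_univ _, imp_del himp hvW, ?_, ?_⟩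
        · have := Finset.card_erase_of_mem hvW
          omega
        · exact fun f hf hc => hF f hf (Finset.erase_subset _ _ hc)
      · intro W₁ hW₁ W₂ hW₂ heq
        rw [Finset.coe_filter] at hW₁ hW₂
        have h1 : v ∈ W₁ := hW₁.2
        have h2 : v ∈ W₂ := hW₂.2
        have heq' : W₁.erase v = W₂.erase v := heq
        rw [← Finset.insert_erase h1, ← Finset.insert_erase h2, heq']
    have t1 : target1.card ≤ 2^(μ-1) := by
      apply ih (μ-1) (by omega) (Gdel H v) (X.erase v) (Y.erase v) F (s-1) (lam-1)
      · intro T hT hTF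
        have hTF' : ∀ f ∈ F, f ∉ insert v T := by
          intro f hf hc
          rcases Finset.mem_insert.mp hc with hc | hc
          · exact hvF (hc ▸ hf)
          · exact hTF f hf hc
        have h1 := hmin _ (sep_del_lift hT) hTF'
        have h2 := Finset.card_insert_le v T
        omega
      · omega
    -- branch 2
    set X' := X ∪ reachF H S X ∪ {v} with hX'def
    set target2 := ((Finset.univ : Finset (Finset V)).filter
      (fun W => IsImpSep H X' Y W ∧ W.card ≤ s ∧ ∀ f ∈ insert v F, f ∉ W)) with htarget2
    have b2 : Cand.filter (fun W => v ∉ W) ⊆ target2 := by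
      intro W hW
      rw [Finset.mem_filter] at hW
      obtain ⟨hW, hvW⟩ := hW
      rw [hCand, Finset.mem_filter] at hW
      obtain ⟨_, himp, hcard, hF⟩ := hW
      rw [htarget2, Finset.mem_filter]
      refine ⟨Finset.mem_univ _, imp_extend hSsep hSF hmin hvS himp hF hvW, hcard, ?_⟩
      intro f hf
      rcases Finset.mem_insert.mp hf with hf | hf
      · exact hf ▸ hvW
      · exact hF f hf
    have t2 : target2.card ≤ 2^(μ-1) := by
      apply ih (μ-1) (by omega) H X' Y (insert v F) s (lam+1)
      · intro T hT hTF
        by_contra hcon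
        push_neg at hcon
        have hTc : T.card ≤ S.card := by omega
        have hTF' : ∀ f ∈ F, f ∉ T := fun f hf => hTF f (Finset.mem_insert_of_mem hf)
        have hvT : v ∉ T := hTF v (Finset.mem_insert_self _ _)
        exact k2 hSsep hSF hmin hmax hvS hT hTF' hvT hTc
      · omega
    have hsplit := Finset.card_filter_add_card_filter_not
      (s := Cand) (p := fun W => v ∈ W)
    have hp2 : 2^(μ-1) + 2^(μ-1) = 2^μ := by
      have h : μ - 1 + 1 = μ := by omega
      calc 2^(μ-1) + 2^(μ-1) = 2^(μ-1) * 2 := (mul_two _).symm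
        _ = 2^(μ-1+1) := (pow_succ 2 _).symm
        _ = 2^μ := by rw [h]
    have c2le := Finset.card_le_card b2
    omega

end CountTheorem
section MainReduction
set_option linter.unusedSectionVars false
set_option maxHeartbeats 1000000
open scoped Classical

variable {V : Type*} [Fintype V] [DecidableEq V]

/-- The subgraph of `G` induced on (the finset) `dm`, as a graph on the same vertex set. -/
def Grestrict (G : SimpleGraph V) (dm : Finset V) : SimpleGraph V where
  Adj x y := G.Adj x y ∧ x ∈ dm ∧ y ∈ dm
  symm := by refine ⟨?_⟩; rintro x y ⟨h1, h2, h3⟩; exact ⟨h1.symm, h3, h2⟩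
  loopless := ⟨fun x h => G.loopless.irrefl x h.1⟩

lemma grestrict_adj {G : SimpleGraph V} {dm : Finset V} {x y : V} :
    (Grestrict G dm).Adj x y ↔ G.Adj x y ∧ x ∈ dm ∧ y ∈ dm := Iff.rfl

lemma rc_restrict_dom {G : SimpleGraph V} {dm W X₀ : Finset V} (hX : X₀ ⊆ dm) {z : V}
    (h : RC (Grestrict G dm) W X₀ z) : z ∈ dm := by
  induction h with
  | base hx _ => exact hX hx
  | step _ hadj _ => exact hadj.2.2

lemma rc_restrict_inter {G : SimpleGraph V} {dm W X₀ : Finset V} (hX : X₀ ⊆ dm) {z : V} :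
    RC (Grestrict G dm) W X₀ z ↔ RC (Grestrict G dm) (W ∩ dm) X₀ z := by
  constructor
  · intro h
    induction h with
    | @base x hx hxW =>
        exact RC.base hx (fun hc => hxW (Finset.mem_inter.mp hc).1)
    | @step y y' h1 hadj hyW ih =>
        exact RC.step ih hadj (fun hc => hyW (Finset.mem_inter.mp hc).1)
  · intro h
    induction h with
    | @base x hx hxW =>
        exact RC.base hx (fun hc => hxW (Finset.mem_inter.mpr ⟨hc, hX hx⟩))
    | @step y y' h1 hadj hyW ih =>
        exact RC.step ih hadj (fun hc => hyW (Finset.mem_inter.mpr ⟨hc, hadj.2.2⟩))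

lemma rc_symm_single {G : SimpleGraph V} {W : Finset V} {a b : V}
    (h : RC G W {a} b) : RC G W {b} a := by
  induction h with
  | @base x hx hxW =>
      rw [Finset.mem_singleton] at hx
      subst hx
      exact RC.base (Finset.mem_singleton_self _) hxW
  | @step y y' h1 hadj hyW ih =>
      refine rc_trans (X := {y'}) ?_ ih
      exact RC.step (RC.base (Finset.mem_singleton_self _) hyW) hadj.symm (rc_not_mem h1)

/-- Pushing lemma: every separator is dominated by an important separator. -/
lemma push_to_imp {G : SimpleGraph V} {X Y : Finset V} (T : Finset V)
    (hT : IsSepSet G T X Y) :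
    ∃ W', IsImpSep G X Y W' ∧ W'.card ≤ T.card ∧ ∀ z, RC G T X z → RC G W' X z := by
  set C := (Finset.univ : Finset (Finset V)).filter
    (fun W => IsSepSet G W X Y ∧ W.card ≤ T.card ∧ ∀ z, RC G T X z → RC G W X z) with hC
  have hTC : T ∈ C := Finset.mem_filter.mpr ⟨Finset.mem_univ _, hT, le_refl _, fun z hz => hz⟩
  obtain ⟨W₁, hW₁, hmax1⟩ := Finset.exists_max_image C (fun W => (reachF G W X).card) ⟨T, hTC⟩
  set C2 := C.filter (fun W => (reachF G W X).card = (reachF G W₁ X).card) with hC2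
  obtain ⟨W', hW'2, hmin2⟩ := Finset.exists_min_image C2 Finset.card
    ⟨W₁, Finset.mem_filter.mpr ⟨hW₁, rfl⟩⟩
  rw [hC2, Finset.mem_filter] at hW'2
  obtain ⟨hW'C, hW'f⟩ := hW'2
  rw [hC, Finset.mem_filter] at hW'C
  obtain ⟨_, hW'sep, hW'card, hW'dom⟩ := hW'C
  refine ⟨W', ⟨hW'sep, ?_, ?_⟩, hW'card, hW'dom⟩
  · -- minimality
    intro W₂ hsub hne hsep₂
    have hss : W₂ ⊂ W' := Finset.ssubset_iff_subset_ne.mpr ⟨hsub, hne⟩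
    have hdom₂ : ∀ z, RC G T X z → RC G W₂ X z := fun z hz => rc_anti hsub (hW'dom z hz)
    have hmem₂ : W₂ ∈ C := Finset.mem_filter.mpr ⟨Finset.mem_univ _, hsep₂,
      le_trans (le_of_lt (Finset.card_lt_card hss)) hW'card, hdom₂⟩
    have hf₂ : (reachF G W₂ X).card = (reachF G W₁ X).card := by
      have h1 := hmax1 W₂ hmem₂
      have h2 : reachF G W' X ⊆ reachF G W₂ X := by
        intro z hz
        exact mem_reachF.mpr (rc_anti hsub (mem_reachF.mp hz))
      have h3 := Finset.card_le_card h2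
      omega
    have := hmin2 W₂ (Finset.mem_filter.mpr ⟨hmem₂, hf₂⟩)
    exact absurd this (not_le.mpr (Finset.card_lt_card hss))
  · -- maximality
    intro T₂ hsep₂ hcard₂ hss
    have hsub : ∀ z, RC G W' X z → RC G T₂ X z := by
      intro z hz
      have := hss.1
      rw [reach_eq, reach_eq] at this
      exact this hz
    obtain ⟨p₀, hp₀1, hp₀2⟩ := Set.not_subset.mp (Set.ssubset_def.mp hss).2
    rw [reach_eq] at hp₀1 hp₀2
    have hmem₂ : T₂ ∈ C := Finset.mem_filter.mpr ⟨Finset.mem_univ _, hsep₂,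
      le_trans hcard₂ hW'card, fun z hz => hsub z (hW'dom z hz)⟩
    have h1 := hmax1 T₂ hmem₂
    have h2 : reachF G W' X ⊂ reachF G T₂ X := by
      rw [Finset.ssubset_iff_subset_ne]
      constructor
      · intro z hz
        exact mem_reachF.mpr (hsub z (mem_reachF.mp hz))
      · intro hc
        apply hp₀2
        have hm : p₀ ∈ reachF G T₂ X := mem_reachF.mpr hp₀1
        rw [← hc] at hm
        exact mem_reachF.mp hm
    have := Finset.card_lt_card h2
    omega

end MainReduction
section FinishReduction
set_option linter.unusedSectionVars false
set_option maxHeartbeats 2000000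
open scoped Classical

variable {V : Type*} [Fintype V] [DecidableEq V]

lemma finish_reduction {G : SimpleGraph V} {D L R : Finset V}
    (hsep : IsSep G L R) (hD : D ⊆ R)
    {u v : V} {S : Finset V} (huL : u ∈ L) (huR : u ∉ R) (hne : v ≠ u)
    (himp : IsImpSep G {v} D S) (huS : u ∈ S)
    (hSLlt : (S ∩ (L \ R)).card <
      (((L ∩ R) \ (L ∩ R).filter (fun z => RC G S {v} z)) \ (L ∩ R ∩ S)).card)
    (hP51 : ∀ z, RC G S {v} z → (z ∈ R ∧ z ∉ L) ∨
      RC (Grestrict G (L \ (L ∩ R ∩ S))) (S ∩ (L \ R))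
        ((L ∩ R).filter (fun z => RC G S {v} z)) z) :
    ∃ ZXp ZSp : Finset V, ZXp ⊆ L ∩ R ∧ ZSp ⊆ (L ∩ R) \ ZXp ∧
      ∃ Wt : Finset V,
        IsImpSep (Grestrict G (L \ ZSp)) ZXp (((L ∩ R) \ ZXp) \ ZSp) Wt ∧ u ∈ Wt ∧
        Wt.card + 1 ≤ (((L ∩ R) \ ZXp) \ ZSp).card := by
  -- basic facts
  have hvS : v ∉ S := by
    intro hc
    have := min_sep_singleton himp.2.1 hc
    rw [this, Finset.mem_singleton] at huS
    exact hne huS.symm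
  have hρv : RC G S {v} v := RC.base (Finset.mem_singleton_self _) hvS
  have hρD : ∀ d ∈ D, ¬ RC G S {v} d := sep_iff.mp himp.1
  have hmemLR : ∀ z : V, z ∈ L ∨ z ∈ R := by
    intro z
    have : z ∈ L ∪ R := hsep.1.symm ▸ Finset.mem_univ z
    exact Finset.mem_union.mp this
  have hnoadj : ∀ a b : V, a ∈ L → a ∉ R → b ∈ R → b ∉ L → ¬ G.Adj a b :=
    fun a b h1 h2 h3 h4 => hsep.2 a h1 h2 b h3 h4
  have hstepL : ∀ {y y' : V}, y ∈ L → y ∉ R → G.Adj y y' → y' ∈ L := by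
    intro y y' hy hyR hadj
    rcases hmemLR y' with h | h
    · exact h
    · by_cases hL : y' ∈ L
      · exact hL
      · exact absurd hadj (hnoadj y y' hy hyR h hL)
  have hminS : ∀ w ∈ S, ¬ IsSepSet G (S.erase w) {v} D := by
    intro w hw
    exact himp.2.1 _ (Finset.erase_subset _ _)
      (fun h => Finset.notMem_erase w S (h.symm ▸ hw))
  obtain ⟨q, hρq, hadjqu⟩ : ∃ q, RC G S {v} q ∧ G.Adj q u := by
    rcases min_sep_nbhd himp.1 (hminS u huS) with h | h
    · rw [Finset.mem_singleton] at h
      exact absurd h.symm hne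
    · exact h
  obtain ⟨d₁, hd₁D, hd₁rc⟩ := min_sep_reach_Y himp.1 (hminS u huS)
  have hρnotS : ∀ z, RC G S {v} z → z ∉ S := fun z hz => rc_not_mem hz
  -- definitions
  set Z := L ∩ R with hZdef
  set LmR := L \ R with hLmRdef
  set ZX := Z.filter (fun z => RC G S {v} z) with hZXdef
  set ZS := Z ∩ S with hZSdef
  set ZY := (Z \ ZX) \ ZS with hZYdef
  set dm := L \ ZS with hdmdef
  set SL := S ∩ LmR with hSLdef
  set Gpp := Grestrict G dm with hGppdef
  have hZL : Z ⊆ L := Finset.inter_subset_left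
  have hZR : Z ⊆ R := Finset.inter_subset_right
  have huZ : u ∉ Z := fun hc => huR (hZR hc)
  have hSL_S : SL ⊆ S := Finset.inter_subset_left
  have hZXmem : ∀ z, z ∈ ZX ↔ z ∈ Z ∧ RC G S {v} z := by
    intro z; rw [hZXdef, Finset.mem_filter]
  have hZYmem : ∀ z, z ∈ ZY ↔ z ∈ Z ∧ ¬ RC G S {v} z ∧ z ∉ S := by
    intro z
    constructor
    · intro hz
      rw [hZYdef, Finset.mem_sdiff, Finset.mem_sdiff] at hz
      obtain ⟨⟨hz1, hz2⟩, hz3⟩ := hz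
      refine ⟨hz1, fun hc => hz2 ((hZXmem z).mpr ⟨hz1, hc⟩), fun hc => hz3 ?_⟩
      rw [hZSdef]
      exact Finset.mem_inter.mpr ⟨hz1, hc⟩
    · rintro ⟨h1, h2, h3⟩
      rw [hZYdef, Finset.mem_sdiff, Finset.mem_sdiff]
      exact ⟨⟨h1, fun hc => h2 ((hZXmem z).mp hc).2⟩,
             fun hc => h3 (Finset.mem_inter.mp (hZSdef ▸ hc)).2⟩
  have hZXdm : ZX ⊆ dm := by
    intro z hz
    rw [hdmdef, Finset.mem_sdiff]
    obtain ⟨hz1, hz2⟩ := (hZXmem z).mp hz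
    exact ⟨hZL hz1, fun hc => hρnotS z hz2 (Finset.mem_inter.mp hc).2⟩
  have huSL : u ∈ SL := by
    rw [hSLdef, Finset.mem_inter, hLmRdef, Finset.mem_sdiff]
    exact ⟨huS, huL, huR⟩
  -- P52
  have hP52 : ∀ z, RC Gpp SL ZX z → RC G S {v} z := by
    intro z hz
    induction hz with
    | @base x hx _ => exact ((hZXmem x).mp hx).2
    | @step y y' h1 hadj hy' ih =>
        refine RC.step ih hadj.1 (fun hc => ?_)
        have hy'dm := hadj.2.2
        rw [hdmdef, Finset.mem_sdiff] at hy'dm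
        by_cases hy'R : y' ∈ R
        · exact hy'dm.2 (by
            rw [hZSdef]
            exact Finset.mem_inter.mpr ⟨Finset.mem_inter.mpr ⟨hy'dm.1, hy'R⟩, hc⟩)
        · exact hy' (by
            rw [hSLdef, hLmRdef]
            exact Finset.mem_inter.mpr ⟨hc, Finset.mem_sdiff.mpr ⟨hy'dm.1, hy'R⟩⟩)
  have hsepSL : IsSepSet Gpp SL ZX ZY := by
    rw [sep_iff]
    intro y hy hrc
    exact ((hZYmem y).mp hy).2.1 (hP52 y hrc)
  -- minimal sub-separator
  set CandSub := SL.powerset.filter (fun T' => IsSepSet Gpp T' ZX ZY) with hCandSub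
  have hCandNe : CandSub.Nonempty :=
    ⟨SL, Finset.mem_filter.mpr ⟨Finset.mem_powerset_self _, hsepSL⟩⟩
  obtain ⟨Wt, hWtmem, hWtmin⟩ := Finset.exists_min_image CandSub Finset.card hCandNe
  rw [hCandSub, Finset.mem_filter, Finset.mem_powerset] at hWtmem
  obtain ⟨hWtsub, hWtsep⟩ := hWtmem
  -- u ∈ Wt via the crossing lemma
  have hQL : q ∈ L := hstepL huL huR hadjqu.symm
  have hqRC'' : RC Gpp SL ZX q := (hP51 q hρq).resolve_left (fun h => h.2 hQL)
  have hudm : u ∈ dm := by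
    rw [hdmdef, Finset.mem_sdiff]
    exact ⟨huL, fun hc => huZ (Finset.mem_inter.mp hc).1⟩
  have hqRCe : RC Gpp (SL.erase u) ZX q := rc_anti (Finset.erase_subset u SL) hqRC''
  have huRCe : RC Gpp (SL.erase u) ZX u :=
    RC.step hqRCe ⟨hadjqu, rc_restrict_dom hZXdm hqRCe, hudm⟩ (Finset.notMem_erase _ _)
  have hPL_L : ∀ z, RC G (S.erase u ∪ (R \ L)) {u} z → z ∈ L := by
    intro z hz
    induction hz with
    | @base x hx _ =>
        rw [Finset.mem_singleton] at hx
        exact hx ▸ huL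
    | @step y y' h1 hadj hyW ih =>
        rcases hmemLR y' with h | h
        · exact h
        · by_cases hL : y' ∈ L
          · exact hL
          · exact (hyW (Finset.mem_union_right _ (Finset.mem_sdiff.mpr ⟨h, hL⟩))).elim
  have hCL : ∃ zs, zs ∈ ZY ∧ RC G (S.erase u ∪ (R \ L)) {u} zs := by
    by_contra hno
    push_neg at hno
    have hclaim : ∀ z, RC G (S.erase u) {u} z →
        RC G (S.erase u ∪ (R \ L)) {u} z ∨ RC G S {v} z := by
      intro z hz
      induction hz with
      | @base x hx _ =>
          rw [Finset.mem_singleton] at hx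
          rw [hx]
          refine Or.inl (RC.base (Finset.mem_singleton_self _) (fun hc => ?_))
          rcases Finset.mem_union.mp hc with hc | hc
          · exact Finset.notMem_erase u S hc
          · exact huR (Finset.mem_sdiff.mp hc).1
      | @step y y' h1 hadj hy' ih =>
          rcases ih with ih | ih
          · by_cases hy'RL : y' ∈ R \ L
            · have hyL : y ∈ L := hPL_L y ih
              have hyR : y ∈ R := by
                by_contra hyR
                rw [Finset.mem_sdiff] at hy'RL
                exact hnoadj y y' hyL hyR hy'RL.1 hy'RL.2 hadj
              have hyZ : y ∈ Z := Finset.mem_inter.mpr ⟨hyL, hyR⟩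
              have hynu : y ≠ u := fun hc => huR (hc ▸ hyR)
              have hyS : y ∉ S := fun hc =>
                rc_not_mem ih (Finset.mem_union_left _ (Finset.mem_erase.mpr ⟨hynu, hc⟩))
              have hyZY : y ∉ ZY := fun hc => hno y hc ih
              have hρy : RC G S {v} y := by
                by_contra hc
                exact hyZY ((hZYmem y).mpr ⟨hyZ, hc, hyS⟩)
              have hy'S : y' ∉ S := by
                intro hc
                have hneu : y' ≠ u := fun h2 => (Finset.mem_sdiff.mp hy'RL).2 (h2 ▸ huL)
                exact hy' (Finset.mem_erase.mpr ⟨hneu, hc⟩)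
              exact Or.inr (RC.step hρy hadj hy'S)
            · refine Or.inl (RC.step ih hadj (fun hc => ?_))
              rcases Finset.mem_union.mp hc with hc | hc
              · exact hy' hc
              · exact hy'RL hc
          · by_cases hy'u : y' = u
            · rw [hy'u]
              refine Or.inl (RC.base (Finset.mem_singleton_self _) (fun hc => ?_))
              rcases Finset.mem_union.mp hc with hc | hc
              · exact Finset.notMem_erase u S hc
              · exact huR (Finset.mem_sdiff.mp hc).1
            · exact Or.inr (RC.step ih hadj
                (fun hc => hy' (Finset.mem_erase.mpr ⟨hy'u, hc⟩)))
    rcases hclaim d₁ hd₁rc with h | h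
    · have hdL : d₁ ∈ L := hPL_L d₁ h
      have hdR : d₁ ∈ R := hD hd₁D
      have hdZ : d₁ ∈ Z := Finset.mem_inter.mpr ⟨hdL, hdR⟩
      have hdnu : d₁ ≠ u := fun hc => huR (hc ▸ hdR)
      have hdS : d₁ ∉ S := fun hc =>
        rc_not_mem h (Finset.mem_union_left _ (Finset.mem_erase.mpr ⟨hdnu, hc⟩))
      have hdZY : d₁ ∉ ZY := fun hc => hno d₁ hc h
      have : RC G S {v} d₁ := by
        by_contra hc
        exact hdZY ((hZYmem d₁).mpr ⟨hdZ, hc, hdS⟩)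
      exact hρD d₁ hd₁D this
    · exact hρD d₁ hd₁D h
  have htr2 : ∀ z, RC G (S.erase u ∪ (R \ L)) {u} z → RC Gpp (SL.erase u) {u} z := by
    intro z hz
    induction hz with
    | @base x hx _ =>
        rw [Finset.mem_singleton] at hx
        subst hx
        exact RC.base (Finset.mem_singleton_self _) (Finset.notMem_erase _ _)
    | @step y y' h1 hadj hy' ih =>
        have hyL : y ∈ L := hPL_L y h1
        have hy'L : y' ∈ L := by
          rcases hmemLR y' with h | h
          · exact h
          · by_cases hL : y' ∈ L
            · exact hL
            · exact (hy' (Finset.mem_union_right _ (Finset.mem_sdiff.mpr ⟨h, hL⟩))).elim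
        have hyZS : y ∉ ZS := by
          intro hc
          rw [hZSdef, Finset.mem_inter] at hc
          have hynu : y ≠ u := fun h2 => huZ (h2 ▸ hc.1)
          exact rc_not_mem h1 (Finset.mem_union_left _ (Finset.mem_erase.mpr ⟨hynu, hc.2⟩))
        have hy'ZS : y' ∉ ZS := by
          intro hc
          rw [hZSdef, Finset.mem_inter] at hc
          have hynu : y' ≠ u := fun h2 => huZ (h2 ▸ hc.1)
          exact hy' (Finset.mem_union_left _ (Finset.mem_erase.mpr ⟨hynu, hc.2⟩))
        refine RC.step ih ⟨hadj, Finset.mem_sdiff.mpr ⟨hyL, hyZS⟩,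
          Finset.mem_sdiff.mpr ⟨hy'L, hy'ZS⟩⟩ (fun hc => ?_)
        refine hy' (Finset.mem_union_left _ (Finset.mem_erase.mpr
          ⟨(Finset.mem_erase.mp hc).1, hSL_S (Finset.mem_erase.mp hc).2⟩))
  obtain ⟨zs, hzsZY, hzsP⟩ := hCL
  have hNu : ¬ IsSepSet Gpp (SL.erase u) ZX ZY := by
    intro hsepE
    exact sep_iff.mp hsepE zs hzsZY (rc_trans huRCe (htr2 zs hzsP))
  have huWt : u ∈ Wt := by
    by_contra hc
    exact hNu (sep_mono (Finset.subset_erase.mpr ⟨hWtsub, hc⟩) hWtsep)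
  -- minimality of Wt
  have hmin'' : ∀ W₂ ⊆ Wt, W₂ ≠ Wt → ¬ IsSepSet Gpp W₂ ZX ZY := by
    intro W₂ hsub hne₂ hsep₂
    have hW₂mem : W₂ ∈ CandSub := by
      rw [hCandSub, Finset.mem_filter, Finset.mem_powerset]
      exact ⟨hsub.trans hWtsub, hsep₂⟩
    have h1 := hWtmin W₂ hW₂mem
    have h2 := Finset.card_lt_card (Finset.ssubset_iff_subset_ne.mpr ⟨hsub, hne₂⟩)
    omega
  -- maximality of Wt
  have hmax'' : ∀ T'' : Finset V, IsSepSet Gpp T'' ZX ZY → T''.card ≤ Wt.card →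
      ¬ (ReachSet Gpp Wt ZX ⊂ ReachSet Gpp T'' ZX) := by
    intro T'' hT''sep hT''card hss
    set T3 := T'' ∩ dm with hT3def
    have hT3eq : ∀ z, RC Gpp T'' ZX z ↔ RC Gpp T3 ZX z := fun z => rc_restrict_inter hZXdm
    have hT3sep : IsSepSet Gpp T3 ZX ZY := by
      rw [sep_iff] at hT''sep ⊢
      intro y hy hrc
      exact hT''sep y hy ((hT3eq y).mpr hrc)
    have hchain : ∀ z, RC Gpp SL ZX z → RC Gpp T3 ZX z := by
      intro z hz
      have h1 : RC Gpp Wt ZX z := rc_anti hWtsub hz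
      have h2 := hss.1
      rw [reach_eq, reach_eq] at h2
      exact (hT3eq z).mp (h2 h1)
    have hT3dm : T3 ⊆ dm := Finset.inter_subset_right
    have hρT3 : ∀ z, RC G S {v} z → z ∉ T3 := by
      intro z hz hc
      have hzdm := hT3dm hc
      have hzL : z ∈ L := by
        rw [hdmdef, Finset.mem_sdiff] at hzdm
        exact hzdm.1
      have hzRC : RC Gpp SL ZX z := (hP51 z hz).resolve_left (fun h => h.2 hzL)
      exact rc_not_mem (hchain z hzRC) hc
    set S' := (S \ LmR) ∪ T3 with hS'def
    have hρS' : ∀ z, RC G S {v} z → RC G S' {v} z := by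
      refine fun z hz => rc_disj (fun w hw hc => ?_) hz
      rcases Finset.mem_union.mp hc with hc | hc
      · exact hρnotS w hw (Finset.mem_sdiff.mp hc).1
      · exact hρT3 w hw hc
    have hMS' : ∀ z, RC G S' {v} z → RC G S {v} z ∨ RC Gpp T3 ZX z := by
      intro z hz
      induction hz with
      | @base x hx _ =>
          rw [Finset.mem_singleton] at hx
          subst hx
          exact Or.inl hρv
      | @step y y' h1 hadj hy'S' ih =>
          rcases ih with ih | ih
          · by_cases hy'S : y' ∈ S
            · have hy'LmR : y' ∈ LmR := by
                by_contra hc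
                exact hy'S' (Finset.mem_union_left _ (Finset.mem_sdiff.mpr ⟨hy'S, hc⟩))
              rw [hLmRdef, Finset.mem_sdiff] at hy'LmR
              have hyL : y ∈ L := hstepL hy'LmR.1 hy'LmR.2 hadj.symm
              have hyRC : RC Gpp SL ZX y := (hP51 y ih).resolve_left (fun h => h.2 hyL)
              have hyT3 : RC Gpp T3 ZX y := hchain y hyRC
              have hy'dm : y' ∈ dm := by
                rw [hdmdef, Finset.mem_sdiff]
                exact ⟨hy'LmR.1, fun hc => hy'LmR.2 (hZR (Finset.mem_inter.mp hc).1)⟩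
              refine Or.inr (RC.step hyT3 ⟨hadj, rc_restrict_dom hZXdm hyT3, hy'dm⟩
                (fun hc => hy'S' (Finset.mem_union_right _ hc)))
            · exact Or.inl (RC.step ih hadj hy'S)
          · have hydm : y ∈ dm := rc_restrict_dom hZXdm ih
            by_cases hy'L : y' ∈ L
            · have hy'ZS : y' ∉ ZS := by
                intro hc
                apply hy'S'
                refine Finset.mem_union_left _ (Finset.mem_sdiff.mpr
                  ⟨(Finset.mem_inter.mp hc).2, fun h2 => ?_⟩)
                rw [hLmRdef, Finset.mem_sdiff] at h2
                exact h2.2 (hZR (Finset.mem_inter.mp hc).1)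
              have hy'dm : y' ∈ dm := by
                rw [hdmdef, Finset.mem_sdiff]
                exact ⟨hy'L, hy'ZS⟩
              refine Or.inr (RC.step ih ⟨hadj, hydm, hy'dm⟩
                (fun hc => hy'S' (Finset.mem_union_right _ hc)))
            · have hy'R : y' ∈ R := (hmemLR y').resolve_left hy'L
              have hyL : y ∈ L := by
                rw [hdmdef, Finset.mem_sdiff] at hydm
                exact hydm.1
              have hyR : y ∈ R := by
                by_contra hyR
                exact hnoadj y y' hyL hyR hy'R hy'L hadj
              have hyZ : y ∈ Z := Finset.mem_inter.mpr ⟨hyL, hyR⟩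
              have hyZS : y ∉ ZS := by
                rw [hdmdef, Finset.mem_sdiff] at hydm
                exact hydm.2
              have hyS : y ∉ S := fun hc => hyZS (by
                rw [hZSdef]
                exact Finset.mem_inter.mpr ⟨hyZ, hc⟩)
              have hyZY : y ∉ ZY := fun hc => sep_iff.mp hT3sep y hc ih
              have hρy : RC G S {v} y := by
                by_contra hc
                exact hyZY ((hZYmem y).mpr ⟨hyZ, hc, hyS⟩)
              have hy'S : y' ∉ S := by
                intro hc
                apply hy'S'
                refine Finset.mem_union_left _ (Finset.mem_sdiff.mpr ⟨hc, fun h2 => ?_⟩)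
                rw [hLmRdef, Finset.mem_sdiff] at h2
                exact hy'L h2.1
              exact Or.inl (RC.step hρy hadj hy'S)
    have hS'sep : IsSepSet G S' {v} D := by
      rw [sep_iff]
      intro d hd hrc
      rcases hMS' d hrc with h | h
      · exact hρD d hd h
      · have hddm := rc_restrict_dom hZXdm h
        rw [hdmdef, Finset.mem_sdiff] at hddm
        have hdZ : d ∈ Z := Finset.mem_inter.mpr ⟨hddm.1, hD hd⟩
        have hdS : d ∉ S := fun hc => hddm.2 (by
          rw [hZSdef]
          exact Finset.mem_inter.mpr ⟨hdZ, hc⟩)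
        have hdZY : d ∉ ZY := fun hc => sep_iff.mp hT3sep d hc h
        have : RC G S {v} d := by
          by_contra hc
          exact hdZY ((hZYmem d).mpr ⟨hdZ, hc, hdS⟩)
        exact hρD d hd this
    obtain ⟨p₀, hp₀1, hp₀2⟩ := Set.not_subset.mp (Set.ssubset_def.mp hss).2
    rw [reach_eq] at hp₀1 hp₀2
    have hp₀T3 : RC Gpp T3 ZX p₀ := (hT3eq p₀).mp hp₀1
    have hp₀notρ : ¬ RC G S {v} p₀ := by
      intro hc
      have hdm := rc_restrict_dom hZXdm hp₀T3
      have hL : p₀ ∈ L := by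
        rw [hdmdef, Finset.mem_sdiff] at hdm
        exact hdm.1
      have := (hP51 p₀ hc).resolve_left (fun h => h.2 hL)
      exact hp₀2 (rc_anti hWtsub this)
    have hliftT3 : ∀ z, RC Gpp T3 ZX z → RC G S' {v} z := by
      intro z hz
      induction hz with
      | @base x hx _ => exact hρS' x ((hZXmem x).mp hx).2
      | @step y y' h1 hadj hy' ih =>
          refine RC.step ih hadj.1 (fun hc => ?_)
          rcases Finset.mem_union.mp hc with hc | hc
          · rw [Finset.mem_sdiff] at hc
            have hy'dm := hadj.2.2
            rw [hdmdef, Finset.mem_sdiff] at hy'dm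
            have hy'R : y' ∈ R := by
              by_contra h2
              exact hc.2 (by
                rw [hLmRdef]
                exact Finset.mem_sdiff.mpr ⟨hy'dm.1, h2⟩)
            exact hy'dm.2 (by
              rw [hZSdef]
              exact Finset.mem_inter.mpr ⟨Finset.mem_inter.mpr ⟨hy'dm.1, hy'R⟩, hc.1⟩)
          · exact hy' hc
    have hp₀S' : RC G S' {v} p₀ := hliftT3 p₀ hp₀T3
    have hcards : S'.card ≤ S.card := by
      have h1 : S'.card ≤ (S \ LmR).card + T3.card := Finset.card_union_le _ _
      have h2 : T3.card ≤ T''.card := Finset.card_le_card Finset.inter_subset_left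
      have h3 : Wt.card ≤ SL.card := Finset.card_le_card hWtsub
      have h4 : (S \ LmR).card + (S ∩ LmR).card = S.card :=
        Finset.card_sdiff_add_card_inter _ _
      rw [← hSLdef] at h4
      omega
    apply himp.2.2 S' hS'sep hcards
    rw [Set.ssubset_def, reach_eq, reach_eq]
    exact ⟨fun z hz => hρS' z hz, fun hcon => hp₀notρ (hcon hp₀S')⟩
  -- conclusion
  refine ⟨ZX, ZS, Finset.filter_subset _ _, ?_, Wt, ⟨hWtsep, hmin'', hmax''⟩, huWt, ?_⟩
  · intro z hz
    rw [hZSdef, Finset.mem_inter] at hz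
    refine Finset.mem_sdiff.mpr ⟨hz.1, fun hc => ?_⟩
    exact hρnotS z ((hZXmem z).mp hc).2 hz.2
  · have h3 := Finset.card_le_card hWtsub
    rw [← hZYdef]
    omega

end FinishReduction
section BigReduction
set_option linter.unusedSectionVars false
set_option maxHeartbeats 2000000
open scoped Classical

variable {V : Type*} [Fintype V] [DecidableEq V]

lemma main_reduction {G : SimpleGraph V} {D : Finset V} {k : ℕ} {L R : Finset V}
    (hsep : IsSep G L R) (hord : (L ∩ R).card ≤ k) (hD : D ⊆ R)
    {u v : V} {S : Finset V} (huL : u ∈ L) (huR : u ∉ R)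
    (hne : v ≠ u) (hKimp : IsKImpSep G k {v} D S) (huS : u ∈ S) :
    ∃ ZXp ZSp : Finset V, ZXp ⊆ L ∩ R ∧ ZSp ⊆ (L ∩ R) \ ZXp ∧
      ∃ Wt : Finset V,
        IsImpSep (Grestrict G (L \ ZSp)) ZXp (((L ∩ R) \ ZXp) \ ZSp) Wt ∧ u ∈ Wt ∧
        Wt.card + 1 ≤ (((L ∩ R) \ ZXp) \ ZSp).card := by
  obtain ⟨himp, hcard, hglob⟩ := hKimp
  -- basic facts
  have hvS : v ∉ S := by
    intro hc
    have := min_sep_singleton himp.2.1 hc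
    rw [this, Finset.mem_singleton] at huS
    exact hne huS.symm
  have hρv : RC G S {v} v := RC.base (Finset.mem_singleton_self _) hvS
  have hρD : ∀ d ∈ D, ¬ RC G S {v} d := sep_iff.mp himp.1
  have hmemLR : ∀ z : V, z ∈ L ∨ z ∈ R := by
    intro z
    have : z ∈ L ∪ R := hsep.1.symm ▸ Finset.mem_univ z
    exact Finset.mem_union.mp this
  have hnoadj : ∀ a b : V, a ∈ L → a ∉ R → b ∈ R → b ∉ L → ¬ G.Adj a b :=
    fun a b h1 h2 h3 h4 => hsep.2 a h1 h2 b h3 h4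
  have hstepL : ∀ {y y' : V}, y ∈ L → y ∉ R → G.Adj y y' → y' ∈ L := by
    intro y y' hy hyR hadj
    rcases hmemLR y' with h | h
    · exact h
    · by_cases hL : y' ∈ L
      · exact hL
      · exact absurd hadj (hnoadj y y' hy hyR h hL)
  have hminS : ∀ w ∈ S, ¬ IsSepSet G (S.erase w) {v} D := by
    intro w hw
    exact himp.2.1 _ (Finset.erase_subset _ _)
      (fun h => Finset.notMem_erase w S (h.symm ▸ hw))
  obtain ⟨q, hρq, hadjqu⟩ : ∃ q, RC G S {v} q ∧ G.Adj q u := by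
    rcases min_sep_nbhd himp.1 (hminS u huS) with h | h
    · rw [Finset.mem_singleton] at h
      exact absurd h.symm hne
    · exact h
  obtain ⟨d₁, hd₁D, hd₁rc⟩ := min_sep_reach_Y himp.1 (hminS u huS)
  -- definitions
  set Z := L ∩ R with hZdef
  set LmR := L \ R with hLmRdef
  set ZX := Z.filter (fun z => RC G S {v} z) with hZXdef
  set ZS := Z ∩ S with hZSdef
  set ZY := (Z \ ZX) \ ZS with hZYdef
  set dm := L \ ZS with hdmdef
  set SL := S ∩ LmR with hSLdef
  have hZL : Z ⊆ L := Finset.inter_subset_left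
  have hZR : Z ⊆ R := Finset.inter_subset_right
  have huZ : u ∉ Z := fun hc => huR (hZR hc)
  have hSLmem : ∀ z, z ∈ SL ↔ z ∈ S ∧ z ∈ L ∧ z ∉ R := by
    intro z
    rw [hSLdef, Finset.mem_inter, hLmRdef, Finset.mem_sdiff]
  have huSL : u ∈ SL := (hSLmem u).mpr ⟨huS, huL, huR⟩
  have hZXmem : ∀ z, z ∈ ZX ↔ z ∈ Z ∧ RC G S {v} z := by
    intro z; rw [hZXdef, Finset.mem_filter]
  have hZYmem : ∀ z, z ∈ ZY ↔ z ∈ Z ∧ ¬ RC G S {v} z ∧ z ∉ S := by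
    intro z
    constructor
    · intro hz
      rw [hZYdef, Finset.mem_sdiff, Finset.mem_sdiff] at hz
      obtain ⟨⟨hz1, hz2⟩, hz3⟩ := hz
      refine ⟨hz1, fun hc => hz2 ((hZXmem z).mpr ⟨hz1, hc⟩), fun hc => hz3 ?_⟩
      rw [hZSdef]
      exact Finset.mem_inter.mpr ⟨hz1, hc⟩
    · rintro ⟨h1, h2, h3⟩
      rw [hZYdef, Finset.mem_sdiff, Finset.mem_sdiff]
      exact ⟨⟨h1, fun hc => h2 ((hZXmem z).mp hc).2⟩,
             fun hc => h3 (Finset.mem_inter.mp (hZSdef ▸ hc)).2⟩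
  have hρnotZY : ∀ z, RC G S {v} z → z ∉ ZY := by
    intro z hz hc
    exact ((hZYmem z).mp hc).2.1 hz
  have hρnotS : ∀ z, RC G S {v} z → z ∉ S := fun z hz => rc_not_mem hz
  have huLmR : u ∈ LmR := Finset.mem_sdiff.mpr ⟨huL, huR⟩
  -- ===================== PART 2: size bound =====================
  set Tex := (S \ LmR) ∪ ZY with hTexdef
  have hK_LmR : ∀ z, RC G (Tex ∪ Z) SL z → z ∈ L ∧ z ∉ R := by
    intro z hz
    induction hz with
    | @base x hx _ =>
        have := (hSLmem x).mp hx
        exact ⟨this.2.1, this.2.2⟩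
    | @step y y' h1 hadj hyW ih =>
        have hy'L : y' ∈ L := hstepL ih.1 ih.2 hadj
        refine ⟨hy'L, fun hc => ?_⟩
        exact hyW (Finset.mem_union_right _ (Finset.mem_inter.mpr ⟨hy'L, hc⟩))
  have hM2 : ∀ z, RC G Tex {v} z → RC G S {v} z ∨ RC G (Tex ∪ Z) SL z := by
    intro z hz
    induction hz with
    | @base x hx _ =>
        rw [Finset.mem_singleton] at hx
        exact Or.inl (hx ▸ hρv)
    | @step y y' h1 hadj hyT ih =>
        rcases ih with ih | ih
        · by_cases hy'S : y' ∈ S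
          · have hy'LmR : y' ∈ LmR := by
              by_contra hc
              exact hyT (Finset.mem_union_left _ (Finset.mem_sdiff.mpr ⟨hy'S, hc⟩))
            refine Or.inr (RC.base ?_ ?_)
            · rw [hSLdef, Finset.mem_inter]; exact ⟨hy'S, hy'LmR⟩
            · intro hc
              rcases Finset.mem_union.mp hc with hc | hc
              · exact hyT hc
              · exact (Finset.mem_sdiff.mp hy'LmR).2 (hZR hc)
          · exact Or.inl (RC.step ih hadj hy'S)
        · by_cases hy'Z : y' ∈ Z
          · have hy'ZY : y' ∉ ZY := fun hc => hyT (Finset.mem_union_right _ hc)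
            have hy'S : y' ∉ S := by
              intro hc
              apply hyT
              refine Finset.mem_union_left _ (Finset.mem_sdiff.mpr ⟨hc, fun hc2 => ?_⟩)
              exact (Finset.mem_sdiff.mp hc2).2 (hZR hy'Z)
            have hρy' : RC G S {v} y' := by
              by_contra hc
              exact hy'ZY ((hZYmem y').mpr ⟨hy'Z, hc, hy'S⟩)
            exact Or.inl hρy'
          · refine Or.inr (RC.step ih hadj (fun hc => ?_))
            rcases Finset.mem_union.mp hc with hc | hc
            · exact hyT hc
            · exact hy'Z hc
  have hTexSep : IsSepSet G Tex {v} D := by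
    rw [sep_iff]
    intro d hd hrc
    rcases hM2 d hrc with h | h
    · exact hρD d hd h
    · exact (hK_LmR d h).2 (hD hd)
  have hρTex : ∀ z, RC G S {v} z → z ∉ Tex := by
    intro z hz hc
    rcases Finset.mem_union.mp hc with hc | hc
    · exact hρnotS z hz (Finset.mem_sdiff.mp hc).1
    · exact hρnotZY z hz hc
  have hρsubTex : ∀ z, RC G S {v} z → RC G Tex {v} z := fun z hz => rc_disj hρTex hz
  have huTex : u ∉ Tex := by
    intro hc
    rcases Finset.mem_union.mp hc with hc | hc
    · exact (Finset.mem_sdiff.mp hc).2 huLmR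
    · exact huZ ((hZYmem u).mp hc).1
  have huRCTex : RC G Tex {v} u := RC.step (hρsubTex q hρq) hadjqu huTex
  have huρ : ¬ RC G S {v} u := fun hc => rc_not_mem hc huS
  have hTexBig : ¬ (Tex.card ≤ S.card) := by
    intro hc
    apply himp.2.2 Tex hTexSep hc
    rw [Set.ssubset_def, reach_eq, reach_eq]
    constructor
    · intro z hz
      exact hρsubTex z hz
    · intro hcon
      exact huρ (hcon huRCTex)
  have hSLlt : SL.card < ZY.card := by
    have h1 : Tex.card ≤ (S \ LmR).card + ZY.card := Finset.card_union_le _ _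
    have h2 : (S \ LmR).card + (S ∩ LmR).card = S.card := Finset.card_sdiff_add_card_inter _ _
    rw [← hSLdef] at h2
    omega
  -- ===================== case split on v =====================
  have hQL : q ∈ L := hstepL huL huR hadjqu.symm
  by_cases hvR : v ∈ R
  case neg =>
    -- v ∈ L \ R
    have hvL : v ∈ L := (hmemLR v).resolve_right hvR
    by_cases hE : ∃ z₀ c, z₀ ∈ Z ∧ z₀ ∉ S ∧ RC G (S ∪ R) {v} c ∧ G.Adj c z₀
    case neg =>
      -- KILL: reach of v avoids Z entirely; push Z to an important separator
      exfalso
      have hCv_LmR : ∀ z, RC G (S ∪ R) {v} z → z ∈ L ∧ z ∉ R := by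
        intro z hz
        induction hz with
        | @base x hx _ =>
            rw [Finset.mem_singleton] at hx
            exact hx ▸ ⟨hvL, hvR⟩
        | @step y y' h1 hadj hyW ih =>
            exact ⟨hstepL ih.1 ih.2 hadj, fun hc => hyW (Finset.mem_union_right _ hc)⟩
      have hρCv : ∀ z, RC G S {v} z → RC G (S ∪ R) {v} z := by
        intro z hz
        induction hz with
        | @base x hx hxW =>
            rw [Finset.mem_singleton] at hx
            subst hx
            exact RC.base (Finset.mem_singleton_self _)
              (fun hc => (Finset.mem_union.mp hc).elim hvS hvR)
        | @step y y' h1 hadj hyW ih =>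
            have hy'R : y' ∉ R := by
              intro hc
              have hy'L : y' ∈ L := hstepL (hCv_LmR y ih).1 (hCv_LmR y ih).2 hadj
              exact hE ⟨y', y, Finset.mem_inter.mpr ⟨hy'L, hc⟩, hyW, ih, hadj⟩
            exact RC.step ih hadj
              (fun hc => (Finset.mem_union.mp hc).elim hyW hy'R)
      have hρnotZ : ∀ z, RC G S {v} z → z ∉ Z := by
        intro z hz hc
        exact (hCv_LmR z (hρCv z hz)).2 (hZR hc)
      have hZrc_LmR : ∀ z, RC G Z {v} z → z ∈ L ∧ z ∉ R := by
        intro z hz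
        induction hz with
        | @base x hx _ =>
            rw [Finset.mem_singleton] at hx
            exact hx ▸ ⟨hvL, hvR⟩
        | @step y y' h1 hadj hyW ih =>
            have hy'L : y' ∈ L := hstepL ih.1 ih.2 hadj
            exact ⟨hy'L, fun hc => hyW (Finset.mem_inter.mpr ⟨hy'L, hc⟩)⟩
      have hZsep : IsSepSet G Z {v} D := by
        rw [sep_iff]
        intro d hd hrc
        exact (hZrc_LmR d hrc).2 (hD hd)
      have hρsubZ : ∀ z, RC G S {v} z → RC G Z {v} z := fun z hz => rc_disj hρnotZ hz
      obtain ⟨W', hW'imp, hW'card, hW'dom⟩ := push_to_imp Z hZsep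
      have hW'k : W'.card ≤ k := le_trans hW'card hord
      have hRCZu : RC G Z {v} u := RC.step (hρsubZ q hρq) hadjqu huZ
      have hne' : W' ≠ S := by
        intro hc
        exact rc_not_mem (hc ▸ hW'dom u hRCZu) huS
      apply hglob W' hW'imp hW'k hne'
      rw [reach_eq, reach_eq]
      intro z hz
      exact hW'dom z (hρsubZ z hz)
    case pos =>
      -- live case with v ∈ L \ R and an escape z₀
      obtain ⟨z₀, c, hz₀Z, hz₀S, hcCv, hadjcz⟩ := hE
      have hCv_LmR : ∀ z, RC G (S ∪ R) {v} z → z ∈ L ∧ z ∉ R := by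
        intro z hz
        induction hz with
        | @base x hx _ =>
            rw [Finset.mem_singleton] at hx
            exact hx ▸ ⟨hvL, hvR⟩
        | @step y y' h1 hadj hyW ih =>
            exact ⟨hstepL ih.1 ih.2 hadj, fun hc => hyW (Finset.mem_union_right _ hc)⟩
      have hρz₀ : RC G S {v} z₀ :=
        RC.step (rc_anti Finset.subset_union_left hcCv) hadjcz hz₀S
      have hz₀ZX : z₀ ∈ ZX := (hZXmem z₀).mpr ⟨hz₀Z, hρz₀⟩
      have hZXdm : ZX ⊆ dm := by
        intro z hz
        rw [hdmdef, Finset.mem_sdiff]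
        obtain ⟨hz1, hz2⟩ := (hZXmem z).mp hz
        exact ⟨hZL hz1, fun hc => hρnotS z hz2 (Finset.mem_inter.mp hc).2⟩
      have hcS : c ∉ S := fun hc => rc_not_mem hcCv (Finset.mem_union_left _ hc)
      have hcL := (hCv_LmR c hcCv).1
      have hcR := (hCv_LmR c hcCv).2
      have hcdm : c ∈ dm := Finset.mem_sdiff.mpr
        ⟨hcL, fun hc => hcS (Finset.mem_inter.mp hc).2⟩
      have hcRC'' : RC (Grestrict G dm) SL ZX c := by
        refine RC.step (RC.base hz₀ZX (fun hc => ?_)) ?_ (fun hc => ?_)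
        · exact hρnotS z₀ hρz₀ (Finset.mem_inter.mp hc).1
        · exact ⟨hadjcz.symm, hZXdm hz₀ZX, hcdm⟩
        · exact hcS (Finset.mem_inter.mp hc).1
      have hCv'_LmR : ∀ z, RC G (S ∪ R) {c} z → z ∈ L ∧ z ∉ R := by
        intro z hz
        induction hz with
        | @base x hx _ =>
            rw [Finset.mem_singleton] at hx
            exact hx ▸ ⟨hcL, hcR⟩
        | @step a b h1 hadj2 hbW ih2 =>
            exact ⟨hstepL ih2.1 ih2.2 hadj2, fun hc => hbW (Finset.mem_union_right _ hc)⟩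
      have hvRC'' : RC (Grestrict G dm) SL ZX v := by
        have hcv : RC G (S ∪ R) {c} v := rc_symm_single hcCv
        have htr : ∀ z, RC G (S ∪ R) {c} z → RC (Grestrict G dm) SL ZX z := by
          intro z hz
          induction hz with
          | @base x hx _ =>
              rw [Finset.mem_singleton] at hx
              rw [hx]
              exact hcRC''
          | @step y y' h1 hadj hyW ih =>
              have hy'S : y' ∉ S := fun hc => hyW (Finset.mem_union_left _ hc)
              have hy'L : y' ∈ L := hstepL (hCv'_LmR y h1).1 (hCv'_LmR y h1).2 hadj
              have hy'dm : y' ∈ dm := Finset.mem_sdiff.mpr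
                ⟨hy'L, fun hc => hy'S (Finset.mem_inter.mp hc).2⟩
              refine RC.step ih ⟨hadj, rc_restrict_dom hZXdm ih, hy'dm⟩
                (fun hc => hy'S (Finset.mem_inter.mp hc).1)
        exact htr v hcv
      -- P51 for this case
      have hP51 : ∀ z, RC G S {v} z → (z ∈ R ∧ z ∉ L) ∨ RC (Grestrict G dm) SL ZX z := by
        intro z hz
        induction hz with
        | @base x hx _ =>
            rw [Finset.mem_singleton] at hx
            exact hx ▸ Or.inr hvRC''
        | @step y y' h1 hadj hy'S ih =>
            have hρy' : RC G S {v} y' := RC.step h1 hadj hy'S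
            rcases ih with ⟨hyR, hyL⟩ | ih
            · by_cases hy'L : y' ∈ L
              · by_cases hy'R : y' ∈ R
                · refine Or.inr (RC.base ((hZXmem y').mpr
                    ⟨Finset.mem_inter.mpr ⟨hy'L, hy'R⟩, hρy'⟩) ?_)
                  exact fun hc => hy'S (Finset.mem_inter.mp hc).1
                · exact absurd hadj.symm (hnoadj y' y hy'L hy'R hyR hyL)
              · exact Or.inl ⟨(hmemLR y').resolve_left hy'L, hy'L⟩
            · by_cases hy'L : y' ∈ L
              · have hy'dm : y' ∈ dm := Finset.mem_sdiff.mpr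
                  ⟨hy'L, fun hc => hy'S (Finset.mem_inter.mp hc).2⟩
                refine Or.inr (RC.step ih ⟨hadj, rc_restrict_dom hZXdm ih, hy'dm⟩
                  (fun hc => hy'S (Finset.mem_inter.mp hc).1))
              · exact Or.inl ⟨(hmemLR y').resolve_left hy'L, hy'L⟩
      exact finish_reduction hsep hD huL huR hne himp huS hSLlt hP51
  case pos =>
    -- v ∈ R
    have hZXdm : ZX ⊆ dm := by
      intro z hz
      rw [hdmdef, Finset.mem_sdiff]
      obtain ⟨hz1, hz2⟩ := (hZXmem z).mp hz
      exact ⟨hZL hz1, fun hc => hρnotS z hz2 (Finset.mem_inter.mp hc).2⟩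
    have hP51 : ∀ z, RC G S {v} z → (z ∈ R ∧ z ∉ L) ∨ RC (Grestrict G dm) SL ZX z := by
      intro z hz
      induction hz with
      | @base x hx hxW =>
          rw [Finset.mem_singleton] at hx
          subst hx
          by_cases hvL : x ∈ L
          · refine Or.inr (RC.base ((hZXmem x).mpr
              ⟨Finset.mem_inter.mpr ⟨hvL, hvR⟩, hρv⟩) ?_)
            exact fun hc => hvS (Finset.mem_inter.mp hc).1
          · exact Or.inl ⟨hvR, hvL⟩
      | @step y y' h1 hadj hy'S ih =>
          have hρy' : RC G S {v} y' := RC.step h1 hadj hy'S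
          rcases ih with ⟨hyR, hyL⟩ | ih
          · by_cases hy'L : y' ∈ L
            · by_cases hy'R : y' ∈ R
              · refine Or.inr (RC.base ((hZXmem y').mpr
                  ⟨Finset.mem_inter.mpr ⟨hy'L, hy'R⟩, hρy'⟩) ?_)
                exact fun hc => hy'S (Finset.mem_inter.mp hc).1
              · exact absurd hadj.symm (hnoadj y' y hy'L hy'R hyR hyL)
            · exact Or.inl ⟨(hmemLR y').resolve_left hy'L, hy'L⟩
          · by_cases hy'L : y' ∈ L
            · have hy'dm : y' ∈ dm := Finset.mem_sdiff.mpr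
                ⟨hy'L, fun hc => hy'S (Finset.mem_inter.mp hc).2⟩
              refine Or.inr (RC.step ih ⟨hadj, rc_restrict_dom hZXdm ih, hy'dm⟩
                (fun hc => hy'S (Finset.mem_inter.mp hc).1))
            · exact Or.inl ⟨(hmemLR y').resolve_left hy'L, hy'L⟩
    exact finish_reduction hsep hD huL huR hne himp huS hSLlt hP51

end BigReduction
section FinalAssembly
set_option linter.unusedSectionVars false
set_option maxHeartbeats 1000000
open scoped Classical

variable {V : Type*} [Fintype V] [DecidableEq V]

lemma sum_pow_two_sdiff (s : Finset V) :
    (∑ p ∈ s.powerset, 2 ^ (s \ p).card) = 3 ^ s.card := by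
  induction s using Finset.induction_on with
  | empty => simp
  | @insert a s ha ih =>
      have hdisj : Disjoint s.powerset (s.powerset.image (insert a)) := by
        rw [Finset.disjoint_left]
        intro p hp hp2
        rw [Finset.mem_image] at hp2
        obtain ⟨q, _, hqe⟩ := hp2
        exact ha (Finset.mem_powerset.mp hp (hqe ▸ Finset.mem_insert_self a q))
      rw [Finset.powerset_insert, Finset.sum_union hdisj]
      have h1 : (∑ p ∈ s.powerset, 2 ^ ((insert a s) \ p).card) =
          2 * ∑ p ∈ s.powerset, 2 ^ (s \ p).card := by
        rw [Finset.mul_sum]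
        refine Finset.sum_congr rfl (fun p hp => ?_)
        have hap : a ∉ p := fun hc => ha (Finset.mem_powerset.mp hp hc)
        have heq : (insert a s) \ p = insert a (s \ p) :=
          Finset.insert_sdiff_of_notMem _ hap
        rw [heq, Finset.card_insert_of_notMem (fun hc => ha (Finset.mem_sdiff.mp hc).1),
          pow_succ]
        ring
      have hinj : ∀ x ∈ s.powerset, ∀ y ∈ s.powerset, insert a x = insert a y → x = y := by
        intro x hx y hy hxy
        have hax : a ∉ x := fun hc => ha (Finset.mem_powerset.mp hx hc)
        have hay : a ∉ y := fun hc => ha (Finset.mem_powerset.mp hy hc)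
        rw [← Finset.erase_insert hax, ← Finset.erase_insert hay, hxy]
      have h2 : (∑ p ∈ s.powerset.image (insert a), 2 ^ ((insert a s) \ p).card) =
          ∑ p ∈ s.powerset, 2 ^ (s \ p).card := by
        rw [Finset.sum_image hinj]
        refine Finset.sum_congr rfl (fun p hp => ?_)
        have hap : a ∉ p := fun hc => ha (Finset.mem_powerset.mp hp hc)
        have heq : (insert a s) \ (insert a p) = s \ p := by
          ext x
          simp only [Finset.mem_sdiff, Finset.mem_insert]
          constructor
          · rintro ⟨hx1, hx2⟩
            push_neg at hx2
            rcases hx1 with h | h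
            · exact absurd h hx2.1
            · exact ⟨h, hx2.2⟩
          · rintro ⟨hx1, hx2⟩
            have hxa : x ≠ a := fun hc => ha (hc ▸ hx1)
            refine ⟨Or.inr hx1, fun hc => ?_⟩
            rcases hc with hc | hc
            · exact hxa hc
            · exact hx2 hc
        rw [heq]
      rw [h1, h2, ih, Finset.card_insert_of_notMem ha, pow_succ]
      ring

lemma Zsep_of_left {G : SimpleGraph V} {L R D : Finset V}
    (hsep : IsSep G L R) (hD : D ⊆ R) {x : V} (hxL : x ∈ L) (hxR : x ∉ R) :
    IsSepSet G (L ∩ R) {x} D := by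
  have hmemLR : ∀ z : V, z ∈ L ∨ z ∈ R := by
    intro z
    have : z ∈ L ∪ R := hsep.1.symm ▸ Finset.mem_univ z
    exact Finset.mem_union.mp this
  rw [sep_iff]
  intro d hd hrc
  have hall : ∀ z, RC G (L ∩ R) {x} z → z ∈ L ∧ z ∉ R := by
    intro z hz
    induction hz with
    | @base w hw _ =>
        rw [Finset.mem_singleton] at hw
        rw [hw]; exact ⟨hxL, hxR⟩
    | @step y y' h1 hadj hyW ih =>
        have hy'L : y' ∈ L := by
          rcases hmemLR y' with h | h
          · exact h
          · by_cases hL : y' ∈ L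
            · exact hL
            · exact absurd hadj (hsep.2 y ih.1 ih.2 y' h hL)
        exact ⟨hy'L, fun hc => hyW (Finset.mem_inter.mpr ⟨hy'L, hc⟩)⟩
  exact (hall d hrc).2 (hD hd)

end FinalAssembly
section TheTheorem
set_option linter.unusedSectionVars false
set_option maxHeartbeats 2000000
open scoped Classical

variable {V : Type*} [Fintype V] [DecidableEq V]

/-- The family of candidate important separators for a tripartition index. -/
noncomputable def famF (G : SimpleGraph V) (L Z : Finset V) (i : ℕ)
    (t : Σ _ : Finset V, Finset V) : Finset (Finset V) :=
  (Finset.univ : Finset (Finset V)).filter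
    (fun W => IsImpSep (Grestrict G (L \ t.2)) t.1 ((Z \ t.1) \ t.2) W ∧
      W.card ≤ i - 1 ∧ ∀ f ∈ (∅ : Finset V), f ∉ W)

theorem kImpExt_unbreakability_tied' (G : SimpleGraph V) (D : Finset V) (k : ℕ)
    (hk : 0 < k) (L R : Finset V) (hsep : IsSep G L R) (hord : (L ∩ R).card ≤ k)
    (hD : D ⊆ R) :
    ((↑L : Set V) ∩ KImpExt G D k).ncard ≤ (L ∩ R).card * (12 ^ (L ∩ R).card + 1) := by
  set Z := L ∩ R with hZdef
  set i := Z.card with hidef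
  set BadF := (L \ R).filter (fun u => u ∈ KImpExt G D k) with hBadF
  have hsub : (↑L : Set V) ∩ KImpExt G D k ⊆ ↑(Z ∪ BadF) := by
    rintro x ⟨hxL, hxA⟩
    rw [Finset.coe_union, Set.mem_union]
    by_cases hxR : x ∈ R
    · exact Or.inl (Finset.mem_inter.mpr ⟨hxL, hxR⟩)
    · exact Or.inr (Finset.mem_filter.mpr ⟨Finset.mem_sdiff.mpr ⟨hxL, hxR⟩, hxA⟩)
  have hncard : ((↑L : Set V) ∩ KImpExt G D k).ncard ≤ (Z ∪ BadF).card := by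
    have h := Set.ncard_le_ncard hsub (Finset.finite_toSet _)
    rwa [Set.ncard_coe_finset] at h
  have hZBad : (Z ∪ BadF).card ≤ i + BadF.card := by
    have := Finset.card_union_le Z BadF
    omega
  set P := Z.powerset.sigma (fun p => (Z \ p).powerset) with hP
  have hcover : BadF ⊆ P.biUnion (fun t => (famF G L Z i t).biUnion id) := by
    intro x hx
    rw [hBadF, Finset.mem_filter, Finset.mem_sdiff] at hx
    obtain ⟨⟨hxL, hxR⟩, hxA⟩ := hx
    rw [KImpExt, Set.mem_setOf_eq] at hxA
    rcases hxA with ⟨v, hvne, S, hKimp, hxS⟩ | ⟨_, _, huniq⟩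
    · obtain ⟨ZX, ZS, hZXsub, hZSsub, Wt, hImp, hxWt, hcount⟩ :=
        main_reduction hsep hord hD hxL hxR hvne hKimp hxS
      have hZYle : (((L ∩ R) \ ZX) \ ZS).card ≤ i := by
        rw [hidef, hZdef]
        refine Finset.card_le_card ?_
        intro z hz
        exact (Finset.mem_sdiff.mp (Finset.mem_sdiff.mp hz).1).1
      rw [Finset.mem_biUnion]
      refine ⟨⟨ZX, ZS⟩, ?_, ?_⟩
      · rw [hP, Finset.mem_sigma, Finset.mem_powerset, Finset.mem_powerset, hZdef]
        exact ⟨hZXsub, hZSsub⟩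
      · rw [Finset.mem_biUnion]
        refine ⟨Wt, ?_, hxWt⟩
        have hfam_eq : famF G L Z i ⟨ZX, ZS⟩ =
            (Finset.univ : Finset (Finset V)).filter
              (fun W => IsImpSep (Grestrict G (L \ ZS)) ZX ((Z \ ZX) \ ZS) W ∧
                W.card ≤ i - 1 ∧ ∀ f ∈ (∅ : Finset V), f ∉ W) := rfl
        rw [hfam_eq, Finset.mem_filter]
        refine ⟨Finset.mem_univ _, ?_, by omega, fun f hf => absurd hf (Finset.notMem_empty f)⟩
        rw [hZdef]
        exact hImp
    · have hzsep := Zsep_of_left hsep hD hxL hxR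
      have heq := huniq (L ∩ R) hzsep hord
      have hxZ : x ∈ L ∩ R := heq ▸ Finset.mem_singleton_self x
      exact absurd (Finset.mem_inter.mp hxZ).2 hxR
  -- counting
  have hcount_t : ∀ t : (Σ _ : Finset V, Finset V), (famF G L Z i t).card ≤ 2 ^ (2 * (i - 1)) := by
    intro t
    exact count_imp (2 * (i - 1)) (Grestrict G (L \ t.2)) t.1 ((Z \ t.1) \ t.2)
      (∅ : Finset V) (i - 1) 0 (fun T _ _ => Nat.zero_le _) (by omega)
  have hinner : ∀ t ∈ P, ((famF G L Z i t).biUnion id).card ≤ (i - 1) * 2 ^ (2 * (i - 1)) := by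
    intro t _
    calc ((famF G L Z i t).biUnion id).card
        ≤ ∑ W ∈ famF G L Z i t, (id W).card := Finset.card_biUnion_le
      _ ≤ ∑ _W ∈ famF G L Z i t, (i - 1) := by
          refine Finset.sum_le_sum (fun W hW => ?_)
          have := (Finset.mem_filter.mp hW).2.2.1
          exact this
      _ = (famF G L Z i t).card * (i - 1) := by rw [Finset.sum_const, smul_eq_mul]
      _ ≤ 2 ^ (2 * (i - 1)) * (i - 1) := Nat.mul_le_mul_right _ (hcount_t t)
      _ = (i - 1) * 2 ^ (2 * (i - 1)) := Nat.mul_comm _ _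
  have hPcard : P.card = 3 ^ i := by
    rw [hP, Finset.card_sigma]
    have : (∑ p ∈ Z.powerset, ((Z \ p).powerset).card) = ∑ p ∈ Z.powerset, 2 ^ (Z \ p).card :=
      Finset.sum_congr rfl (fun p _ => Finset.card_powerset _)
    rw [this, sum_pow_two_sdiff, hidef]
  have hbig : (P.biUnion (fun t => (famF G L Z i t).biUnion id)).card ≤
      3 ^ i * ((i - 1) * 2 ^ (2 * (i - 1))) := by
    calc (P.biUnion (fun t => (famF G L Z i t).biUnion id)).card
        ≤ ∑ t ∈ P, ((famF G L Z i t).biUnion id).card := Finset.card_biUnion_le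
      _ ≤ P.card * ((i - 1) * 2 ^ (2 * (i - 1))) := by
          have := Finset.sum_le_card_nsmul P (fun t => ((famF G L Z i t).biUnion id).card)
            ((i - 1) * 2 ^ (2 * (i - 1))) hinner
          rwa [smul_eq_mul] at this
      _ = 3 ^ i * ((i - 1) * 2 ^ (2 * (i - 1))) := by rw [hPcard]
  have hBadcard : BadF.card ≤ 3 ^ i * ((i - 1) * 2 ^ (2 * (i - 1))) :=
    le_trans (Finset.card_le_card hcover) hbig
  -- arithmetic
  have h4 : (2 : ℕ) ^ (2 * (i - 1)) = 4 ^ (i - 1) := by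
    rw [pow_mul]
    norm_num
  have h12 : (12 : ℕ) ^ i = 3 ^ i * 4 ^ i := by
    rw [← Nat.mul_pow]
  have hfinal : 3 ^ i * ((i - 1) * 2 ^ (2 * (i - 1))) ≤ i * 12 ^ i := by
    rw [h4]
    calc 3 ^ i * ((i - 1) * 4 ^ (i - 1))
        ≤ 3 ^ i * (i * 4 ^ i) := by
          refine Nat.mul_le_mul_left _ (Nat.mul_le_mul (Nat.sub_le i 1)
            (Nat.pow_le_pow_right (by norm_num) (Nat.sub_le i 1)))
      _ = i * (3 ^ i * 4 ^ i) := by ring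
      _ = i * 12 ^ i := by rw [h12]
  calc ((↑L : Set V) ∩ KImpExt G D k).ncard
      ≤ (Z ∪ BadF).card := hncard
    _ ≤ i + BadF.card := hZBad
    _ ≤ i + i * 12 ^ i := Nat.add_le_add_left (le_trans hBadcard hfinal) _
    _ = i * (12 ^ i + 1) := by ring

end TheTheorem

/-- the `k`-important separator extension `A` of `D` is
`(i·(12^i + 1))`-unbreakability-tied to `D`: every separation `(L,R)` of order `i ≤ k`
with `D ⊆ R` satisfies `|L ∩ A| ≤ i·(12^i + 1)`. -/
theorem kImpExt_unbreakability_tied (G : SimpleGraph V) (D : Finset V) (k : ℕ)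
    (hk : 0 < k) (L R : Finset V) (hsep : IsSep G L R) (hord : (L ∩ R).card ≤ k)
    (hD : D ⊆ R) :
    ((↑L : Set V) ∩ KImpExt G D k).ncard ≤ (L ∩ R).card * (12 ^ (L ∩ R).card + 1) := by
  exact kImpExt_unbreakability_tied' G D k hk L R hsep hord hD
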